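/- arXiv:1412.2691 — 10 statements merged into one kernel-verified Lean document; each statement's English description precedes it below -/
import Mathlib

section
/- Let V be a real vector space, let n ≥ 1, and let a₁, …, aₙ ∈ V with the convention aₙ₊₁ = a₁. Then the element ∑_{i=1}^{n} (aᵢ − p) ∧ (aᵢ₊₁ − p) of the second exterior power ⋀²(V) does not depend on the choice of p ∈ V; equivalently, for all p, q ∈ V, ∑_{i=1}^{n} (aᵢ − p) ∧ (aᵢ₊₁ − p) = ∑_{i=1}^{n} (aᵢ − q) ∧ (aᵢ₊₁ − q). (Grassmann-calculus form of Peano's Theorem 2.1: the bi-vector associated to a closed polygonal line is well defined.) -/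
open ExteriorAlgebra

lemma peano_aux (V : Type*) [AddCommGroup V] [Module ℝ V]
    (n : ℕ) (a : ℕ → V) (ha : a (n + 1) = a 1) (p : V) :
    ∑ i ∈ Finset.Icc 1 n, ι ℝ (a i - p) * ι ℝ (a (i + 1) - p) =
      ∑ i ∈ Finset.Icc 1 n, ι ℝ (a i) * ι ℝ (a (i + 1)) := by
  have key : ∀ i, ι ℝ (a i - p) * ι ℝ (a (i + 1) - p) =
      ι ℝ (a i) * ι ℝ (a (i + 1)) +
        (ι ℝ p * ι ℝ (a i) - ι ℝ p * ι ℝ (a (i + 1))) := by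
    intro i
    have h1 : ι ℝ (a i) * ι ℝ p = - (ι ℝ p * ι ℝ (a i)) :=
      eq_neg_of_add_eq_zero_left (ι_add_mul_swap _ _)
    simp only [map_sub, sub_mul, mul_sub, ι_sq_zero (R := ℝ) p, h1]
    abel
  simp only [key, Finset.sum_add_distrib]
  have htel : ∑ i ∈ Finset.Icc 1 n, (ι ℝ p * ι ℝ (a i) - ι ℝ p * ι ℝ (a (i + 1))) = 0 := by
    have : Finset.Icc 1 n = Finset.Ico 1 (n + 1) := by
      rw [Nat.Icc_eq_range', Nat.Ico_eq_range']
    rw [this, Finset.sum_Ico_eq_sum_range]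
    simp only [Nat.add_sub_cancel]
    have := Finset.sum_range_sub' (fun i => ι ℝ p * ι ℝ (a (1 + i)) :
      ℕ → ExteriorAlgebra ℝ V) n
    simp only [add_assoc] at this ⊢
    rw [this]
    rw [show 1 + n = n + 1 from Nat.add_comm 1 n, ha]
    simp
  rw [htel, add_zero]

/-- Grassmann-calculus form of Peano's Theorem 2.1: for a closed polygonal line
`a₁, …, aₙ, aₙ₊₁ = a₁` in a real vector space `V`, the bi-vector
`∑ᵢ (aᵢ − p) ∧ (aᵢ₊₁ − p) ∈ ⋀²(V)` does not depend on the choice of `p ∈ V`. -/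
theorem peano_bivector_polygon_well_defined
    (V : Type*) [AddCommGroup V] [Module ℝ V]
    (n : ℕ) (hn : 1 ≤ n) (a : ℕ → V) (ha : a (n + 1) = a 1) (p q : V) :
    ∑ i ∈ Finset.Icc 1 n, ι ℝ (a i - p) * ι ℝ (a (i + 1) - p) =
      ∑ i ∈ Finset.Icc 1 n, ι ℝ (a i - q) * ι ℝ (a (i + 1) - q) := by
  rw [peano_aux V n a ha p, peano_aux V n a ha q]
end

section
/- Let n ≥ 1 and let A₁, …, Aₙ be points of ℝ³ with the convention Aₙ₊₁ = A₁ (a closed, not necessarily planar, polygonal line). Then there exist points X, Y, Z ∈ ℝ³ (a triangle) such that for every point P ∈ ℝ³, ∑_{i=1}^{n} (Aᵢ − P) ×ᵥ (Aᵢ₊₁ − P) = (Y − X) ×ᵥ (Z − X). Consequently, for every direction, the signed area of the parallel projection of the polygonal line on an arbitrary plane equals the signed area of the projection of the triangle X Y Z. (Peano's Theorem on the area of a non-planar polygon, Theorem 2.2: every closed polygonal line is equipollent to a triangle.) -/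
open Matrix

lemma exists_cross_eq (v : Fin 3 → ℝ) : ∃ Y Z : Fin 3 → ℝ, Y ⨯₃ Z = v := by
  by_cases h1 : v 0 = 0 ∧ v 1 = 0
  · exact ⟨![1, 0, 0], ![0, v 2, 0], by
      ext i; fin_cases i <;> simp [cross_apply, h1.1, h1.2]⟩
  · have hd : v 0 * v 0 + v 1 * v 1 ≠ 0 := by
      rcases not_and_or.mp h1 with h | h <;> intro hc <;> nlinarith [mul_self_nonneg (v 0), mul_self_nonneg (v 1), mul_self_pos.mpr h]
    refine ⟨![-v 1 / (v 0 * v 0 + v 1 * v 1), v 0 / (v 0 * v 0 + v 1 * v 1), 0],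
      ![-(v 2 * v 0), -(v 2 * v 1), v 0 * v 0 + v 1 * v 1], ?_⟩
    have hd2 : v 0 ^ 2 + v 1 ^ 2 ≠ 0 := by rw [sq, sq]; exact hd
    have hd3 : v 1 ^ 2 + v 0 ^ 2 ≠ 0 := by rw [add_comm]; exact hd2
    ext i; fin_cases i <;> (simp [cross_apply]; try field_simp [hd2, hd3]; try ring)

/-- Peano's theorem on the area of a non-planar polygon (Theorem 2.2):
every closed (not necessarily planar) polygonal line `A₁, …, Aₙ, Aₙ₊₁ = A₁` in ℝ³
is equipollent to a triangle `X Y Z`: for every point `P`,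
`∑ᵢ (Aᵢ − P) ×ᵥ (Aᵢ₊₁ − P) = (Y − X) ×ᵥ (Z − X)`. -/
theorem peano_nonplanar_polygon_equipollent_triangle
    (n : ℕ) (hn : 1 ≤ n) (A : ℕ → Fin 3 → ℝ) (hA : A (n + 1) = A 1) :
    ∃ X Y Z : Fin 3 → ℝ, ∀ P : Fin 3 → ℝ,
      ∑ i ∈ Finset.Icc 1 n, (A i - P) ⨯₃ (A (i + 1) - P) = (Y - X) ⨯₃ (Z - X) := by
  obtain ⟨Y, Z, hYZ⟩ := exists_cross_eq (∑ i ∈ Finset.Icc 1 n, A i ⨯₃ A (i + 1))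
  refine ⟨0, Y, Z, fun P => ?_⟩
  have expand : ∀ a b : Fin 3 → ℝ, (a - P) ⨯₃ (b - P) = a ⨯₃ b + (b - a) ⨯₃ P := by
    intro a b; ext i; fin_cases i <;> (simp [cross_apply]; ring)
  have tel : ∑ i ∈ Finset.Icc 1 n, (A (i + 1) - A i) = 0 := by
    have h := Finset.sum_range_sub (f := fun i => A (1 + i)) n
    rw [← Finset.Ico_add_one_right_eq_Icc, Finset.sum_Ico_eq_sum_range]
    have h2 : n + 1 - 1 = n := by omega
    rw [h2]
    calc ∑ i ∈ Finset.range n, (A (1 + i + 1) - A (1 + i))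
        = A (1 + n) - A (1 + 0) := h
      _ = 0 := by rw [Nat.add_comm 1 n, hA]; simp
  have lin : ∑ i ∈ Finset.Icc 1 n, (A (i + 1) - A i) ⨯₃ P
      = (∑ i ∈ Finset.Icc 1 n, (A (i + 1) - A i)) ⨯₃ P := by
    rw [map_sum crossProduct, LinearMap.sum_apply]
  calc ∑ i ∈ Finset.Icc 1 n, (A i - P) ⨯₃ (A (i + 1) - P)
      = ∑ i ∈ Finset.Icc 1 n, (A i ⨯₃ A (i + 1) + (A (i + 1) - A i) ⨯₃ P) := by
        simp_rw [expand]
    _ = (∑ i ∈ Finset.Icc 1 n, A i ⨯₃ A (i + 1))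
        + ∑ i ∈ Finset.Icc 1 n, (A (i + 1) - A i) ⨯₃ P := Finset.sum_add_distrib
    _ = (Y - 0) ⨯₃ (Z - 0) := by
        rw [lin, tel, sub_zero, sub_zero]
        simp only [map_zero, LinearMap.zero_apply, add_zero]
        exact hYZ.symm
end

section
/- Let V be a 3-dimensional real vector space. Then every element of the second exterior power ⋀²(V) is decomposable: for every w ∈ ⋀²(V) there exist u, v ∈ V such that w = u ∧ v. (This is the key lemma used by Peano to represent closed contours by bi-vectors, i.e., products of two vectors.) -/
open ExteriorAlgebra

private lemma ι_swap {V : Type*} [AddCommGroup V] [Module ℝ V] (x y : V) :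
    ι ℝ x * ι ℝ y = -(ι ℝ y * ι ℝ x) :=
  eq_neg_of_add_eq_zero_left (ι_add_mul_swap x y)

private lemma decomp_helper {V : Type*} [AddCommGroup V] [Module ℝ V]
    (e0 e1 e2 : V) (a b c : ℝ) :
    ∃ u v : V, a • (ι ℝ e1 * ι ℝ e2) + b • (ι ℝ e2 * ι ℝ e0) + c • (ι ℝ e0 * ι ℝ e1)
      = ι ℝ u * ι ℝ v := by
  by_cases ha : a = 0
  · subst ha
    refine ⟨e0, c • e1 - b • e2, ?_⟩
    rw [map_sub, map_smul, map_smul, mul_sub, mul_smul_comm, mul_smul_comm,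
      ι_swap e0 e2]
    module
  · refine ⟨a • e1 - b • e0, e2 - (a⁻¹ * c) • e0, ?_⟩
    have hc : c = a * (a⁻¹ * c) := by field_simp
    simp only [map_sub, map_smul, sub_mul, mul_sub, smul_mul_assoc, mul_smul_comm,
      smul_smul, ι_sq_zero, smul_zero, ι_swap e1 e0, ι_swap e0 e2]
    nth_rewrite 1 [hc]
    module

/-- In a 3-dimensional real vector space `V`, every element of the second exterior
power `⋀²(V)` is decomposable: it is the wedge product `u ∧ v` of two vectors. -/
theorem bivector_decomposable_of_finrank_three
    (V : Type*) [AddCommGroup V] [Module ℝ V] (hV : Module.finrank ℝ V = 3)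
    (w : ⋀[ℝ]^2 V) :
    ∃ u v : V, (w : ExteriorAlgebra ℝ V) = ι ℝ u * ι ℝ v := by
  have : FiniteDimensional ℝ V := FiniteDimensional.of_finrank_eq_succ hV
  let e : Module.Basis (Fin 3) ℝ V := Module.finBasisOfFinrankEq ℝ V hV
  set S : Set (ExteriorAlgebra ℝ V) :=
    {ι ℝ (e 1) * ι ℝ (e 2), ι ℝ (e 2) * ι ℝ (e 0), ι ℝ (e 0) * ι ℝ (e 1)} with hS
  have m12 : ι ℝ (e 1) * ι ℝ (e 2) ∈ Submodule.span ℝ S :=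
    Submodule.subset_span (by simp [hS])
  have m20 : ι ℝ (e 2) * ι ℝ (e 0) ∈ Submodule.span ℝ S :=
    Submodule.subset_span (by simp [hS])
  have m01 : ι ℝ (e 0) * ι ℝ (e 1) ∈ Submodule.span ℝ S :=
    Submodule.subset_span (by simp [hS])
  have hbase : ∀ i j : Fin 3, ι ℝ (e i) * ι ℝ (e j) ∈ Submodule.span ℝ S := by
    intro i j
    fin_cases i <;> fin_cases j
    · rw [ι_sq_zero]; exact Submodule.zero_mem _
    · exact m01
    · rw [ι_swap]; exact Submodule.neg_mem _ m20
    · rw [ι_swap]; exact Submodule.neg_mem _ m01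
    · rw [ι_sq_zero]; exact Submodule.zero_mem _
    · exact m12
    · exact m20
    · rw [ι_swap]; exact Submodule.neg_mem _ m12
    · rw [ι_sq_zero]; exact Submodule.zero_mem _
  have hprod : ∀ x y : V, ι ℝ x * ι ℝ y ∈ Submodule.span ℝ S := by
    intro x y
    rw [← e.sum_repr x, ← e.sum_repr y, map_sum, map_sum, Finset.sum_mul_sum]
    refine Submodule.sum_mem _ fun i _ => Submodule.sum_mem _ fun j _ => ?_
    rw [map_smul, map_smul, smul_mul_assoc, mul_smul_comm]
    exact Submodule.smul_mem _ _ (Submodule.smul_mem _ _ (hbase i j))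
  have hw : (w : ExteriorAlgebra ℝ V) ∈ Submodule.span ℝ S := by
    have h1 : (w : ExteriorAlgebra ℝ V) ∈
        Submodule.span ℝ (Set.range (ιMulti ℝ 2 (M := V))) := by
      rw [ιMulti_span_fixedDegree]; exact w.2
    refine Submodule.span_le.2 ?_ h1
    rintro _ ⟨v, rfl⟩
    have : ιMulti ℝ 2 v = ι ℝ (v 0) * ι ℝ (v 1) := by
      simp [ιMulti_apply, List.ofFn_succ, Matrix.vecTail]
    rw [this]
    exact hprod _ _
  rw [hS] at hw
  rw [Submodule.mem_span_insert] at hw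
  obtain ⟨a, z, hz, hwz⟩ := hw
  rw [Submodule.mem_span_insert] at hz
  obtain ⟨b, z', hz', hzz⟩ := hz
  rw [Submodule.mem_span_singleton] at hz'
  obtain ⟨c, rfl⟩ := hz'
  obtain ⟨u, v, huv⟩ := decomp_helper (e 0) (e 1) (e 2) a b c
  exact ⟨u, v, by rw [hwz, hzz, ← add_assoc, huv]⟩
end

section
/- Let n ≥ 1 and let (Aᵢ, Bᵢ, Cᵢ), i = 1, …, n, be triples of points of ℝ³ (the triangular faces of a closed oriented polyhedral surface), satisfying the closedness condition ∑_{i=1}^{n} (Bᵢ − Aᵢ) ×ᵥ (Cᵢ − Aᵢ) = 0. Then the sum of the oriented volumes of the tetrahedra P Aᵢ Bᵢ Cᵢ, namely ∑_{i=1}^{n} det[Aᵢ − P, Bᵢ − P, Cᵢ − P], does not depend on the choice of the vertex P ∈ ℝ³: for all P, Q ∈ ℝ³, ∑_{i=1}^{n} det[Aᵢ − P, Bᵢ − P, Cᵢ − P] = ∑_{i=1}^{n} det[Aᵢ − Q, Bᵢ − Q, Cᵢ − Q]. (Peano's Theorem on the volume of an oriented polyhedron, Theorem 2.3.) -/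
open Matrix

/-- Determinant of the 3×3 matrix with columns `u`, `v`, `w`. -/
noncomputable def det3 (u v w : Fin 3 → ℝ) : ℝ := ((Matrix.of ![u, v, w])ᵀ).det

lemma det3_shift (a b c p q : Fin 3 → ℝ) :
    det3 (a - p) (b - p) (c - p) =
      det3 (a - q) (b - q) (c - q) + (q - p) ⬝ᵥ ((b - a) ⨯₃ (c - a)) := by
  simp only [det3, Matrix.det_transpose, Matrix.det_fin_three, crossProduct,
    dotProduct, Fin.sum_univ_three, Matrix.of_apply, Matrix.cons_val',
    Matrix.cons_val_zero, Matrix.cons_val_one, Matrix.head_cons, Matrix.empty_val',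
    Matrix.cons_val_fin_one, Matrix.head_fin_const, Pi.sub_apply,
    LinearMap.mk₂_apply, Matrix.cons_val_two, Matrix.tail_cons]
  ring

/-- Peano's theorem on the volume of an oriented polyhedron (Theorem 2.3):
for a closed oriented polyhedral surface with triangular faces `Aᵢ Bᵢ Cᵢ`
(closedness: `∑ᵢ (Bᵢ − Aᵢ) ×ᵥ (Cᵢ − Aᵢ) = 0`), the sum of oriented volumes
`∑ᵢ det[Aᵢ − P, Bᵢ − P, Cᵢ − P]` does not depend on the vertex `P`. -/
theorem peano_volume_oriented_polyhedron
    (n : ℕ) (hn : 1 ≤ n) (A B C : ℕ → Fin 3 → ℝ)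
    (hclosed : ∑ i ∈ Finset.Icc 1 n, (B i - A i) ⨯₃ (C i - A i) = 0)
    (P Q : Fin 3 → ℝ) :
    ∑ i ∈ Finset.Icc 1 n, det3 (A i - P) (B i - P) (C i - P) =
      ∑ i ∈ Finset.Icc 1 n, det3 (A i - Q) (B i - Q) (C i - Q) := by
  have key : ∀ i, det3 (A i - P) (B i - P) (C i - P) =
      det3 (A i - Q) (B i - Q) (C i - Q) +
        (Q - P) ⬝ᵥ ((B i - A i) ⨯₃ (C i - A i)) := fun i =>
    det3_shift (A i) (B i) (C i) P Q
  have h2 : ∑ i ∈ Finset.Icc 1 n, (Q - P) ⬝ᵥ ((B i - A i) ⨯₃ (C i - A i)) = 0 := by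
    have : ∑ i ∈ Finset.Icc 1 n, (Q - P) ⬝ᵥ ((B i - A i) ⨯₃ (C i - A i)) =
        (Q - P) ⬝ᵥ (∑ i ∈ Finset.Icc 1 n, (B i - A i) ⨯₃ (C i - A i)) := by
      simp only [dotProduct, Finset.sum_apply, Finset.mul_sum]
      exact Finset.sum_comm
    rw [this, hclosed, dotProduct_zero]
  simp only [key, Finset.sum_add_distrib, h2, add_zero]
end

section
/- Let n ≥ 1 and let (Aᵢ, Bᵢ, Cᵢ), i = 1, …, n, be triples of points of ℝ³. Then the quantity ∑_{i=1}^{n} det[Aᵢ − P, Bᵢ − P, Cᵢ − P] is independent of the point P ∈ ℝ³ (i.e., takes the same value for all P) if and only if ∑_{i=1}^{n} (Bᵢ − Aᵢ) ×ᵥ (Cᵢ − Aᵢ) = 0. (The converse noted by Peano: the closedness condition ω₃(∑ᵢ AᵢBᵢCᵢ) = 0 holds if and only if the sum of oriented volumes of the tetrahedra P Aᵢ Bᵢ Cᵢ does not depend on P.) -/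
open Matrix

lemma det3_sub (a b c p : Fin 3 → ℝ) :
    det3 (a - p) (b - p) (c - p) = det3 a b c - p ⬝ᵥ ((b - a) ⨯₃ (c - a)) := by
  simp [det3, Matrix.det_fin_three, crossProduct, dotProduct, Fin.sum_univ_three,
    Matrix.vecHead, Matrix.vecTail, Pi.sub_apply, Function.comp]
  ring

lemma dot_sum (p : Fin 3 → ℝ) (s : Finset ℕ) (f : ℕ → Fin 3 → ℝ) :
    p ⬝ᵥ ∑ i ∈ s, f i = ∑ i ∈ s, p ⬝ᵥ f i := by
  simp only [dotProduct, Finset.sum_apply, Finset.mul_sum]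
  exact Finset.sum_comm

/-- The converse noted by Peano: the sum of oriented volumes
`∑ᵢ det[Aᵢ − P, Bᵢ − P, Cᵢ − P]` is independent of `P` if and only if the
closedness condition `∑ᵢ (Bᵢ − Aᵢ) ×ᵥ (Cᵢ − Aᵢ) = 0` holds. -/
theorem peano_volume_independent_iff_closed
    (n : ℕ) (hn : 1 ≤ n) (A B C : ℕ → Fin 3 → ℝ) :
    (∀ P Q : Fin 3 → ℝ,
        ∑ i ∈ Finset.Icc 1 n, det3 (A i - P) (B i - P) (C i - P) =
          ∑ i ∈ Finset.Icc 1 n, det3 (A i - Q) (B i - Q) (C i - Q)) ↔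
      ∑ i ∈ Finset.Icc 1 n, (B i - A i) ⨯₃ (C i - A i) = 0 := by
  set V := ∑ i ∈ Finset.Icc 1 n, (B i - A i) ⨯₃ (C i - A i) with hV
  have key : ∀ P : Fin 3 → ℝ,
      ∑ i ∈ Finset.Icc 1 n, det3 (A i - P) (B i - P) (C i - P) =
        (∑ i ∈ Finset.Icc 1 n, det3 (A i) (B i) (C i)) - P ⬝ᵥ V := by
    intro P
    rw [hV, dot_sum, ← Finset.sum_sub_distrib]
    exact Finset.sum_congr rfl fun i _ => det3_sub _ _ _ _
  constructor
  · intro h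
    have h2 := h V 0
    rw [key, key, zero_dotProduct] at h2
    have : V ⬝ᵥ V = 0 := by linarith
    exact dotProduct_self_eq_zero.mp this
  · intro h P Q
    rw [key, key, h, dotProduct_zero, dotProduct_zero]
end

section
/- Let a < b and let γ : [a, b] → ℝ³ be a continuously differentiable closed curve (γ(a) = γ(b)), let O ∈ ℝ³, and set N := (1/2)∫ₐᵇ (γ(t) − O) ×ᵥ γ′(t) dt. Then for every pair of orthonormal vectors u, v ∈ ℝ³, the signed area of the orthogonal projection of γ on the plane spanned by u and v, namely (1/2)∫ₐᵇ (⟨γ(t) − O, u⟩⟨γ′(t), v⟩ − ⟨γ(t) − O, v⟩⟨γ′(t), u⟩) dt, equals ⟨N, u ×ᵥ v⟩. (Peano: projecting a closed curve on an arbitrary plane, the signed area bounded by the projection equals the corresponding projection of the bi-vector associated to the curve.) -/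
open Matrix
open scoped RealInnerProductSpace

/-- The cross product on Euclidean 3-space. -/
noncomputable def cross3 (u v : EuclideanSpace ℝ (Fin 3)) : EuclideanSpace ℝ (Fin 3) :=
  (WithLp.equiv 2 (Fin 3 → ℝ)).symm
    (crossProduct ((WithLp.equiv 2 (Fin 3 → ℝ)) u) ((WithLp.equiv 2 (Fin 3 → ℝ)) v))

lemma inner_cross3_cross3 (x y u v : EuclideanSpace ℝ (Fin 3)) :
    ⟪cross3 x y, cross3 u v⟫ = ⟪x, u⟫ * ⟪y, v⟫ - ⟪x, v⟫ * ⟪y, u⟫ := by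
  simp only [cross3, PiLp.inner_apply, RCLike.inner_apply, conj_trivial,
    Fin.sum_univ_three, crossProduct, LinearMap.mk₂_apply, WithLp.equiv_symm_apply, PiLp.toLp_apply,
    WithLp.equiv_apply, Matrix.cons_val_zero, Matrix.cons_val_one, Matrix.head_cons,
    Matrix.cons_val_two, Matrix.tail_cons]
  ring

lemma cross3_continuousOn {s : Set ℝ} {f g : ℝ → EuclideanSpace ℝ (Fin 3)}
    (hf : ContinuousOn f s) (hg : ContinuousOn g s) :
    ContinuousOn (fun t => cross3 (f t) (g t)) s := by
  have hf' : ∀ i, ContinuousOn (fun t => f t i) s := fun i =>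
    ((EuclideanSpace.proj i : EuclideanSpace ℝ (Fin 3) →L[ℝ] ℝ).continuous.comp_continuousOn hf)
  have hg' : ∀ i, ContinuousOn (fun t => g t i) s := fun i =>
    ((EuclideanSpace.proj i : EuclideanSpace ℝ (Fin 3) →L[ℝ] ℝ).continuous.comp_continuousOn hg)
  simp only [cross3, WithLp.equiv_symm_apply]
  apply (PiLp.continuous_toLp 2 _).comp_continuousOn
  rw [continuousOn_pi]
  intro i
  fin_cases i <;>
    simp only [cross3, crossProduct, LinearMap.mk₂_apply, WithLp.equiv_symm_apply, PiLp.toLp_apply,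
      WithLp.equiv_apply, Matrix.cons_val_zero, Matrix.cons_val_one, Matrix.head_cons,
      Matrix.cons_val_two, Matrix.tail_cons] <;>
    exact (((hf' _).mul (hg' _)).sub ((hf' _).mul (hg' _)))

/-- Peano: projecting a closed C¹ curve `γ` on the plane spanned by orthonormal
vectors `u`, `v`, the signed area bounded by the projection,
`(1/2)∫ₐᵇ (⟨γ − O, u⟩⟨γ′, v⟩ − ⟨γ − O, v⟩⟨γ′, u⟩) dt`, equals the corresponding
projection `⟨N, u ×ᵥ v⟩` of the bi-vector `N = (1/2)∫ₐᵇ (γ − O) ×ᵥ γ′ dt`. -/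
theorem peano_projection_of_bivector
    (a b : ℝ) (hab : a < b) (γ γ' : ℝ → EuclideanSpace ℝ (Fin 3))
    (hderiv : ∀ t ∈ Set.Icc a b, HasDerivWithinAt γ (γ' t) (Set.Icc a b) t)
    (hcont : ContinuousOn γ' (Set.Icc a b))
    (hclosed : γ a = γ b)
    (O : EuclideanSpace ℝ (Fin 3))
    (N : EuclideanSpace ℝ (Fin 3))
    (hN : N = (1 / 2 : ℝ) • ∫ t in a..b, cross3 (γ t - O) (γ' t))
    (u v : EuclideanSpace ℝ (Fin 3))
    (hu : ‖u‖ = 1) (hv : ‖v‖ = 1) (huv : ⟪u, v⟫ = 0) :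
    (1 / 2 : ℝ) * ∫ t in a..b,
        (⟪γ t - O, u⟫ * ⟪γ' t, v⟫ - ⟪γ t - O, v⟫ * ⟪γ' t, u⟫) =
      ⟪N, cross3 u v⟫ := by
  have hγc : ContinuousOn γ (Set.Icc a b) := fun t ht =>
    (hderiv t ht).continuousWithinAt
  have hfc : ContinuousOn (fun t => cross3 (γ t - O) (γ' t)) (Set.Icc a b) :=
    cross3_continuousOn (hγc.sub continuousOn_const) hcont
  have hint : IntervalIntegrable (fun t => cross3 (γ t - O) (γ' t))
      MeasureTheory.volume a b := by
    apply ContinuousOn.intervalIntegrable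
    rwa [Set.uIcc_of_le hab.le]
  have key := (innerSL ℝ (cross3 u v)).intervalIntegral_comp_comm hint (a := a) (b := b)
  simp only [innerSL_apply_apply] at key
  rw [hN, real_inner_smul_left]
  congr 1
  rw [real_inner_comm, ← key]
  apply intervalIntegral.integral_congr
  intro t _
  simp only [real_inner_comm (cross3 u v), inner_cross3_cross3,
    real_inner_comm u (γ t - O), real_inner_comm v (γ' t),
    real_inner_comm u (γ' t), real_inner_comm v (γ t - O)]
  ring
end

section
/- Let t₀ < t₁ and let A, B : [t₀, t₁] → ℝ² be continuously differentiable, such that the closed segments [A(t), B(t)] and [A(t′), B(t′)] are disjoint whenever t ≠ t′, t, t′ ∈ [t₀, t₁]. Then the set ⋃_{t ∈ [t₀,t₁]} [A(t), B(t)] spanned by the moving segment has Lebesgue measure (area) u given by u = (1/2) ∫_{t₀}^{t₁} |det(B(t) − A(t), A′(t) + B′(t))| dt. (Peano's formula for planar area, Applicazioni geometriche, Theorem 47.) -/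
set_option maxHeartbeats 1000000

open MeasureTheory

section PeanoAux
open Set Filter Topology

/-- 2×2 determinant of the pair of vectors `u`, `v` in the plane. -/
def det2 (u v : ℝ × ℝ) : ℝ := u.1 * v.2 - u.2 * v.1

lemma det2_swap (u v : ℝ × ℝ) : det2 u v = -det2 v u := by simp [det2]; ring

lemma det2_add_smul (w P Q : ℝ × ℝ) (s : ℝ) :
    det2 w (P + s • Q) = det2 w P + s * det2 w Q := by
  simp [det2]; ring

lemma det2_smul_self (w : ℝ × ℝ) (s : ℝ) : det2 w (s • w) = 0 := by
  simp [det2]; ring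

lemma det2_eq_zero_imp {w v : ℝ × ℝ} (hw : w ≠ 0) (h : det2 w v = 0) : ∃ c : ℝ, v = c • w := by
  unfold det2 at h
  rcases eq_or_ne w.1 0 with h1 | h1
  · have h2 : w.2 ≠ 0 := fun h2 => hw (Prod.ext h1 h2)
    refine ⟨v.2 / w.2, ?_⟩
    have hv1 : v.1 = 0 := by
      rw [h1] at h
      have : w.2 * v.1 = 0 := by linarith
      exact (mul_eq_zero.1 this).resolve_left h2
    ext
    · simp [hv1, h1]
    · simp; field_simp
  · refine ⟨v.1 / w.1, ?_⟩
    ext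
    · simp; field_simp
    · simp; field_simp; nlinarith [h]

noncomputable def ell (w : ℝ × ℝ) : (ℝ × ℝ) →L[ℝ] ℝ :=
  w.1 • (ContinuousLinearMap.snd ℝ ℝ ℝ) - w.2 • (ContinuousLinearMap.fst ℝ ℝ ℝ)

@[simp] lemma ell_apply (w v : ℝ × ℝ) : ell w v = det2 w v := by
  simp [ell, det2]

lemma mem_seg {x y q : ℝ × ℝ} {c : ℝ} (hc : c ∈ Set.Icc (0:ℝ) 1)
    (hq : q = x + c • (y - x)) : q ∈ segment ℝ x y := by
  rw [segment_eq_image' (𝕜 := ℝ) x y]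
  exact ⟨c, hc, hq.symm⟩

noncomputable def Lmap (c1 c2 : ℝ × ℝ) : (ℝ × ℝ) →L[ℝ] (ℝ × ℝ) :=
  (ContinuousLinearMap.fst ℝ ℝ ℝ).smulRight c1 + (ContinuousLinearMap.snd ℝ ℝ ℝ).smulRight c2

lemma Lmap_apply (c1 c2 : ℝ × ℝ) (v : ℝ × ℝ) : Lmap c1 c2 v = v.1 • c1 + v.2 • c2 := by
  simp [Lmap]

lemma Lmap_det (c1 c2 : ℝ × ℝ) : (Lmap c1 c2).det = det2 c1 c2 := by
  have : (Lmap c1 c2).det = LinearMap.det ((Lmap c1 c2) : (ℝ × ℝ) →ₗ[ℝ] (ℝ × ℝ)) := rfl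
  rw [this, ← LinearMap.det_toMatrix (Module.Basis.finTwoProd ℝ)]
  rw [Matrix.det_fin_two]
  simp [LinearMap.toMatrix_apply, Lmap_apply, det2]
  ring

lemma integral_abs_affine {a b : ℝ} (h : 0 ≤ a * (a + b)) :
    ∫ s in Set.Icc (0:ℝ) 1, |a + s * b| = |a + b / 2| := by
  have hbase : ∀ c d : ℝ, ∫ s in Set.Icc (0:ℝ) 1, (c + s * d) = c + d / 2 := by
    intro c d
    rw [integral_Icc_eq_integral_Ioc, ← intervalIntegral.integral_of_le zero_le_one]
    have h1 : IntervalIntegrable (fun s : ℝ => s * d) volume 0 1 :=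
      (continuous_id.mul continuous_const).intervalIntegrable _ _
    rw [intervalIntegral.integral_add (intervalIntegrable_const) h1]
    simp [intervalIntegral.integral_mul_const, integral_id]
    ring
  rcases mul_nonneg_iff.1 h with ⟨h1, h2⟩ | ⟨h1, h2⟩
  · have he : Set.EqOn (fun s : ℝ => |a + s * b|) (fun s : ℝ => a + s * b) (Set.Icc 0 1) := by
      intro s hs
      simp only
      rw [abs_of_nonneg]
      nlinarith [hs.1, hs.2]
    rw [setIntegral_congr_fun measurableSet_Icc he, hbase, abs_of_nonneg (by linarith)]
  · have he : Set.EqOn (fun s : ℝ => |a + s * b|) (fun s : ℝ => -a + s * (-b)) (Set.Icc 0 1) := by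
      intro s hs
      simp only
      rw [abs_of_nonpos]
      · ring
      · nlinarith [hs.1, hs.2]
    rw [setIntegral_congr_fun measurableSet_Icc he, hbase, abs_of_nonpos (by linarith)]
    ring

/-- The key geometric sign lemma : by disjointness of nearby segments, the normal
velocities of the two endpoints have the same sign. -/
lemma key_sign
    (t₀ t₁ : ℝ) (h : t₀ < t₁) (A B A' B' : ℝ → ℝ × ℝ)
    (hA : ∀ t ∈ Set.Icc t₀ t₁, HasDerivWithinAt A (A' t) (Set.Icc t₀ t₁) t)
    (hB : ∀ t ∈ Set.Icc t₀ t₁, HasDerivWithinAt B (B' t) (Set.Icc t₀ t₁) t)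
    (hdisj : ∀ t ∈ Set.Icc t₀ t₁, ∀ t' ∈ Set.Icc t₀ t₁, t ≠ t' →
      Disjoint (segment ℝ (A t) (B t)) (segment ℝ (A t') (B t')))
    (t : ℝ) (ht : t ∈ Set.Icc t₀ t₁) :
    0 ≤ det2 (B t - A t) (A' t) * det2 (B t - A t) (B' t) := by
  by_contra h'
  push_neg at h'
  set w := B t - A t with hw_def
  have hw : w ≠ 0 := by
    intro h0
    rw [h0] at h'
    simp [det2] at h'
  have hwn : (0:ℝ) < ‖w‖ := norm_pos_iff.2 hw
  set F0 := det2 w (A' t) with hF0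
  set F1 := det2 w (B' t) with hF1
  have hden : F0 - F1 ≠ 0 := by
    rcases mul_neg_iff.1 h' with ⟨h1, h2⟩ | ⟨h1, h2⟩ <;> intro e <;> nlinarith
  set r : ℝ := F0 / (F0 - F1) with hr_def
  have hr0 : 0 < r := by
    rcases mul_neg_iff.1 h' with ⟨h1, h2⟩ | ⟨h1, h2⟩
    · exact div_pos h1 (by linarith)
    · exact div_pos_of_neg_of_neg h1 (by linarith)
  have hr1 : r < 1 := by
    rcases mul_neg_iff.1 h' with ⟨h1, h2⟩ | ⟨h1, h2⟩
    · rw [div_lt_one (by linarith)]; linarith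
    · rw [div_lt_one_of_neg (by linarith)]; linarith
  set σ : ℝ := r / 2 with hσ_def
  set τ : ℝ := (r + 1) / 2 with hτ_def
  have hσ0 : 0 < σ := by positivity
  have hστ : σ < τ := by rw [hσ_def, hτ_def]; linarith
  have hτ1 : τ < 1 := by rw [hτ_def]; linarith
  have f_eq : ∀ s : ℝ, det2 w (A' t + s • (B' t - A' t)) = F0 + s * (F1 - F0) := by
    intro s; simp [det2, hF0, hF1]; ring
  have hrkey : r * (F1 - F0) = -F0 := by
    rw [hr_def]; field_simp; ring
  have hfσ : det2 w (A' t + σ • (B' t - A' t)) = F0 / 2 := by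
    rw [f_eq, hσ_def]; nlinarith [hrkey]
  have hfτ : det2 w (A' t + τ • (B' t - A' t)) = F1 / 2 := by
    rw [f_eq, hτ_def]; nlinarith [hrkey]
  set l := 𝓝[Set.Icc t₀ t₁ \ {t}] t with hl_def
  have hlne : l.NeBot := by
    rw [hl_def, ← mem_closure_iff_nhdsWithin_neBot]
    rcases lt_or_eq_of_le ht.2 with h2 | h2
    · apply closure_mono (show Set.Ioc t t₁ ⊆ Set.Icc t₀ t₁ \ {t} from
        fun u hu => ⟨⟨le_trans ht.1 hu.1.le, hu.2⟩, ne_of_gt hu.1⟩)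
      rw [closure_Ioc (ne_of_lt h2)]
      exact ⟨le_refl t, h2.le⟩
    · apply closure_mono (show Set.Ico t₀ t ⊆ Set.Icc t₀ t₁ \ {t} from
        fun u hu => ⟨⟨hu.1, le_trans hu.2.le ht.2⟩, ne_of_lt hu.2⟩)
      rw [closure_Ico (show t₀ ≠ t by rw [← h2] at h; exact ne_of_lt h)]
      exact ⟨ht.1, le_refl t⟩
  have hg : ∀ s : ℝ, HasDerivWithinAt (fun u => det2 w (A u + s • (B u - A u) - A t))
      (det2 w (A' t + s • (B' t - A' t))) (Set.Icc t₀ t₁) t := by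
    intro s
    have hstuff : HasDerivWithinAt (fun u => A u + s • (B u - A u) - A t)
        (A' t + s • (B' t - A' t)) (Set.Icc t₀ t₁) t := by
      simpa using (((hA t ht).add (((hB t ht).sub (hA t ht)).const_smul s)).sub_const (A t))
    have := (ell w).hasFDerivAt.comp_hasDerivWithinAt t hstuff
    simpa [Function.comp_def] using this
  have g_at_t : ∀ s : ℝ, det2 w (A t + s • (B t - A t) - A t) = 0 := by
    intro s
    have : A t + s • (B t - A t) - A t = s • w := by rw [hw_def]; abel
    rw [this, det2_smul_self]
  have hslope : ∀ s : ℝ, Tendsto (slope (fun u => det2 w (A u + s • (B u - A u) - A t)) t) l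
      (𝓝 (det2 w (A' t + s • (B' t - A' t)))) := by
    intro s
    exact hasDerivWithinAt_iff_tendsto_slope.1 (hg s)
  have hprod : Tendsto (fun u => slope (fun u => det2 w (A u + σ • (B u - A u) - A t)) t u *
      slope (fun u => det2 w (A u + τ • (B u - A u) - A t)) t u) l (𝓝 (F0/2 * (F1/2))) := by
    have := (hslope σ).mul (hslope τ)
    rwa [hfσ, hfτ] at this
  have hlim_neg : F0/2 * (F1/2) < 0 := by nlinarith
  have ev1 : ∀ᶠ u in l, slope (fun u => det2 w (A u + σ • (B u - A u) - A t)) t u *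
      slope (fun u => det2 w (A u + τ • (B u - A u) - A t)) t u < 0 :=
    hprod.eventually_lt_const hlim_neg
  set δ : ℝ := min σ (1 - τ) with hδ_def
  have hδ0 : 0 < δ := lt_min hσ0 (by linarith)
  have hcont : Tendsto (fun u => ‖A u - A t‖ + ‖B u - B t‖) l (𝓝 0) := by
    have hA2 : Tendsto A l (𝓝 (A t)) :=
      ((hA t ht).continuousWithinAt).tendsto.mono_left (nhdsWithin_mono t diff_subset)
    have hB2 : Tendsto B l (𝓝 (B t)) :=
      ((hB t ht).continuousWithinAt).tendsto.mono_left (nhdsWithin_mono t diff_subset)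
    have : Tendsto (fun u => ‖A u - A t‖ + ‖B u - B t‖) l (𝓝 (‖A t - A t‖ + ‖B t - B t‖)) :=
      ((hA2.sub tendsto_const_nhds).norm).add ((hB2.sub tendsto_const_nhds).norm)
    simpa using this
  have ev2 : ∀ᶠ u in l, ‖A u - A t‖ + ‖B u - B t‖ < δ * ‖w‖ :=
    hcont.eventually_lt_const (by positivity)
  obtain ⟨u, hu1, hu2, hu3⟩ := (ev1.and (ev2.and eventually_mem_nhdsWithin)).exists
  obtain ⟨huI, hut⟩ := hu3
  have hut' : u - t ≠ 0 := sub_ne_zero.2 hut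
  have hgu : det2 w (A u + σ • (B u - A u) - A t) * det2 w (A u + τ • (B u - A u) - A t) < 0 := by
    have e1 : det2 w (A u + σ • (B u - A u) - A t)
        = slope (fun u => det2 w (A u + σ • (B u - A u) - A t)) t u * (u - t) := by
      rw [slope_def_field, g_at_t, sub_zero]; field_simp
    have e2 : det2 w (A u + τ • (B u - A u) - A t)
        = slope (fun u => det2 w (A u + τ • (B u - A u) - A t)) t u * (u - t) := by
      rw [slope_def_field, g_at_t, sub_zero]; field_simp
    rw [e1, e2]
    have h2 : (0:ℝ) < (u - t)^2 := by positivity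
    nlinarith
  have hcontφ : ContinuousOn (fun s : ℝ => det2 w (A u + s • (B u - A u) - A t)) (Set.uIcc σ τ) := by
    have : (fun s : ℝ => det2 w (A u + s • (B u - A u) - A t))
        = fun s => det2 w (A u - A t) + s * det2 w (B u - A u) := by
      funext s
      rw [show A u + s • (B u - A u) - A t = (A u - A t) + s • (B u - A u) by abel, det2_add_smul]
    rw [this]
    fun_prop
  have h0mem : (0:ℝ) ∈ Set.uIcc (det2 w (A u + σ • (B u - A u) - A t))
      (det2 w (A u + τ • (B u - A u) - A t)) := by
    rcases mul_neg_iff.1 hgu with ⟨h1, h2⟩ | ⟨h1, h2⟩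
    · exact Set.mem_uIcc.2 (Or.inr ⟨h2.le, h1.le⟩)
    · exact Set.mem_uIcc.2 (Or.inl ⟨h1.le, h2.le⟩)
  obtain ⟨s', hs'mem, hs'0⟩ := intermediate_value_uIcc hcontφ h0mem
  rw [Set.uIcc_of_le hστ.le] at hs'mem
  have hs'01 : s' ∈ Set.Icc (0:ℝ) 1 := ⟨le_trans hσ0.le hs'mem.1, le_trans hs'mem.2 hτ1.le⟩
  set q : ℝ × ℝ := A u + s' • (B u - A u) with hq_def
  have hq_u : q ∈ segment ℝ (A u) (B u) := mem_seg hs'01 rfl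
  obtain ⟨c, hc⟩ := det2_eq_zero_imp hw hs'0
  have hdiff : q - A t - s' • w = (1 - s') • (A u - A t) + s' • (B u - B t) := by
    rw [hq_def, hw_def]
    module
  have hcs : |c - s'| * ‖w‖ < δ * ‖w‖ := by
    have e : (c - s') • w = (1 - s') • (A u - A t) + s' • (B u - B t) := by
      rw [← hdiff, hc]; module
    have : ‖(c - s') • w‖ ≤ (1 - s') * ‖A u - A t‖ + s' * ‖B u - B t‖ := by
      rw [e]
      refine le_trans (norm_add_le _ _) ?_
      rw [norm_smul, norm_smul, Real.norm_eq_abs, Real.norm_eq_abs,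
        abs_of_nonneg (by linarith [hs'01.2] : (0:ℝ) ≤ 1 - s'), abs_of_nonneg hs'01.1]
    rw [norm_smul, Real.norm_eq_abs] at this
    calc |c - s'| * ‖w‖ ≤ (1 - s') * ‖A u - A t‖ + s' * ‖B u - B t‖ := this
      _ ≤ ‖A u - A t‖ + ‖B u - B t‖ := by
          nlinarith [norm_nonneg (A u - A t), norm_nonneg (B u - B t), hs'01.1, hs'01.2]
      _ < δ * ‖w‖ := hu2
  have hcs' : |c - s'| < δ := lt_of_mul_lt_mul_right hcs (norm_nonneg w)
  have hc01 : c ∈ Set.Icc (0:ℝ) 1 := by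
    have h1 := abs_lt.1 hcs'
    constructor
    · have h2 : δ ≤ σ := min_le_left _ _
      linarith [hs'mem.1, h1.1]
    · have h2 : δ ≤ 1 - τ := min_le_right _ _
      linarith [hs'mem.2, h1.2]
  have hq_t : q ∈ segment ℝ (A t) (B t) := by
    refine mem_seg hc01 ?_
    have h2 : q - A t = c • (B t - A t) := hc
    exact sub_eq_iff_eq_add'.1 h2
  exact Set.disjoint_left.1 (hdisj t ht u huI (fun e => hut e.symm)) hq_t hq_u

lemma phi_fderiv (t₀ t₁ : ℝ) (A B A' B' : ℝ → ℝ × ℝ)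
    (hA : ∀ t ∈ Set.Icc t₀ t₁, HasDerivWithinAt A (A' t) (Set.Icc t₀ t₁) t)
    (hB : ∀ t ∈ Set.Icc t₀ t₁, HasDerivWithinAt B (B' t) (Set.Icc t₀ t₁) t)
    (p : ℝ × ℝ) (hp : p ∈ (Set.Icc t₀ t₁) ×ˢ (Set.Icc (0:ℝ) 1)) :
    HasFDerivWithinAt (fun q : ℝ × ℝ => A q.1 + q.2 • (B q.1 - A q.1))
      (Lmap (A' p.1 + p.2 • (B' p.1 - A' p.1)) (B p.1 - A p.1))
      ((Set.Icc t₀ t₁) ×ˢ (Set.Icc (0:ℝ) 1)) p := by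
  set D := (Set.Icc t₀ t₁) ×ˢ (Set.Icc (0:ℝ) 1) with hD
  have hmaps : Set.MapsTo (Prod.fst : ℝ × ℝ → ℝ) D (Set.Icc t₀ t₁) := fun q hq => hq.1
  have hfst : HasFDerivWithinAt (Prod.fst : ℝ × ℝ → ℝ)
      (ContinuousLinearMap.fst ℝ ℝ ℝ) D p := hasFDerivAt_fst.hasFDerivWithinAt
  have hA1 : HasFDerivWithinAt (fun q : ℝ × ℝ => A q.1)
      (((1 : ℝ →L[ℝ] ℝ).smulRight (A' p.1)).comp (ContinuousLinearMap.fst ℝ ℝ ℝ)) D p :=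
    HasFDerivWithinAt.comp p ((hA p.1 hp.1).hasFDerivWithinAt) hfst hmaps
  have hB1 : HasFDerivWithinAt (fun q : ℝ × ℝ => B q.1)
      (((1 : ℝ →L[ℝ] ℝ).smulRight (B' p.1)).comp (ContinuousLinearMap.fst ℝ ℝ ℝ)) D p :=
    HasFDerivWithinAt.comp p ((hB p.1 hp.1).hasFDerivWithinAt) hfst hmaps
  have hsnd : HasFDerivWithinAt (fun q : ℝ × ℝ => q.2)
      (ContinuousLinearMap.snd ℝ ℝ ℝ) D p := hasFDerivAt_snd.hasFDerivWithinAt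
  have htot := hA1.add (hsnd.smul (hB1.sub hA1))
  refine htot.congr_fderiv ?_
  refine ContinuousLinearMap.ext fun v => ?_
  simp [Lmap, smul_sub, sub_smul, smul_smul]
  module

lemma phi_image (t₀ t₁ : ℝ) (A B : ℝ → ℝ × ℝ) :
    (fun q : ℝ × ℝ => A q.1 + q.2 • (B q.1 - A q.1)) '' ((Set.Icc t₀ t₁) ×ˢ (Set.Icc (0:ℝ) 1))
      = ⋃ t ∈ Set.Icc t₀ t₁, segment ℝ (A t) (B t) := by
  ext z
  simp only [Set.mem_image, Set.mem_iUnion, Set.mem_prod, segment_eq_image' (𝕜 := ℝ),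
    exists_prop]
  constructor
  · rintro ⟨⟨t, s⟩, ⟨ht, hs⟩, rfl⟩
    exact ⟨t, ht, s, hs, rfl⟩
  · rintro ⟨t, ht, s, hs, rfl⟩
    exact ⟨(t, s), ⟨ht, hs⟩, rfl⟩

lemma phi_inj (t₀ t₁ : ℝ) (A B : ℝ → ℝ × ℝ)
    (hdisj : ∀ t ∈ Set.Icc t₀ t₁, ∀ t' ∈ Set.Icc t₀ t₁, t ≠ t' →
      Disjoint (segment ℝ (A t) (B t)) (segment ℝ (A t') (B t'))) :
    Set.InjOn (fun q : ℝ × ℝ => A q.1 + q.2 • (B q.1 - A q.1))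
      (((Set.Icc t₀ t₁) ×ˢ (Set.Icc (0:ℝ) 1)) \
        ((Set.Icc t₀ t₁ ∩ (fun t => B t - A t) ⁻¹' {0}) ×ˢ (Set.Icc (0:ℝ) 1))) := by
  rintro ⟨t, s⟩ ⟨⟨ht, hs⟩, hbad⟩ ⟨t', s'⟩ ⟨⟨ht', hs'⟩, hbad'⟩ he
  simp only at he
  rcases eq_or_ne t t' with rfl | hne
  · have hw : B t - A t ≠ 0 := by
      intro h0
      exact hbad ⟨⟨ht, h0⟩, hs⟩
    have h3 : s • (B t - A t) = s' • (B t - A t) := add_left_cancel he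
    have : (s - s') • (B t - A t) = 0 := by rw [sub_smul, h3, sub_self]
    rcases smul_eq_zero.1 this with h0 | h0
    · exact Prod.ext rfl (by linarith [sub_eq_zero.1 (by exact_mod_cast h0)])
    · exact absurd h0 hw
  · exfalso
    have h1 : A t + s • (B t - A t) ∈ segment ℝ (A t) (B t) := mem_seg hs rfl
    have h2 : A t + s • (B t - A t) ∈ segment ℝ (A t') (B t') := by
      rw [he]; exact mem_seg hs' rfl
    exact Set.disjoint_left.1 (hdisj t ht t' ht' hne) h1 h2

end PeanoAux

/-- Peano's formula for planar area (Applicazioni geometriche, Theorem 47):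
if the closed segments `[A(t), B(t)]`, `t ∈ [t₀, t₁]`, are pairwise disjoint,
the region they span has area
`(1/2) ∫_{t₀}^{t₁} |det(B(t) − A(t), A′(t) + B′(t))| dt`. -/
theorem peano_planar_area_formula
    (t₀ t₁ : ℝ) (h : t₀ < t₁) (A B A' B' : ℝ → ℝ × ℝ)
    (hA : ∀ t ∈ Set.Icc t₀ t₁, HasDerivWithinAt A (A' t) (Set.Icc t₀ t₁) t)
    (hB : ∀ t ∈ Set.Icc t₀ t₁, HasDerivWithinAt B (B' t) (Set.Icc t₀ t₁) t)
    (hA' : ContinuousOn A' (Set.Icc t₀ t₁))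
    (hB' : ContinuousOn B' (Set.Icc t₀ t₁))
    (hdisj : ∀ t ∈ Set.Icc t₀ t₁, ∀ t' ∈ Set.Icc t₀ t₁, t ≠ t' →
      Disjoint (segment ℝ (A t) (B t)) (segment ℝ (A t') (B t'))) :
    (volume (⋃ t ∈ Set.Icc t₀ t₁, segment ℝ (A t) (B t))).toReal =
      (1 / 2) * ∫ t in t₀..t₁, |det2 (B t - A t) (A' t + B' t)| := by
  classical
  set D : Set (ℝ × ℝ) := (Set.Icc t₀ t₁) ×ˢ (Set.Icc (0:ℝ) 1) with hD_def
  set Bad : Set (ℝ × ℝ) :=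
    (Set.Icc t₀ t₁ ∩ (fun t => B t - A t) ⁻¹' {0}) ×ˢ (Set.Icc (0:ℝ) 1) with hBad_def
  set Φ : ℝ × ℝ → ℝ × ℝ := fun q => A q.1 + q.2 • (B q.1 - A q.1) with hΦ_def
  set F : ℝ × ℝ → ℝ :=
    fun p => |det2 (B p.1 - A p.1) (A' p.1 + p.2 • (B' p.1 - A' p.1))| with hF_def
  have hDmeas : MeasurableSet D := measurableSet_Icc.prod measurableSet_Icc
  have hAc : ContinuousOn A (Set.Icc t₀ t₁) := fun t ht => (hA t ht).continuousWithinAt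
  have hBc : ContinuousOn B (Set.Icc t₀ t₁) := fun t ht => (hB t ht).continuousWithinAt
  have hTclosed : IsClosed (Set.Icc t₀ t₁ ∩ (fun t => B t - A t) ⁻¹' {0}) :=
    (hBc.sub hAc).preimage_isClosed_of_isClosed isClosed_Icc isClosed_singleton
  have hBadmeas : MeasurableSet Bad := hTclosed.measurableSet.prod measurableSet_Icc
  have hGmeas : MeasurableSet (D \ Bad) := hDmeas.diff hBadmeas
  have hder : ∀ p ∈ D, HasFDerivWithinAt Φ
      (Lmap (A' p.1 + p.2 • (B' p.1 - A' p.1)) (B p.1 - A p.1)) D p :=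
    fun p hp => phi_fderiv t₀ t₁ A B A' B' hA hB p hp
  have habs_det : ∀ p : ℝ × ℝ,
      |(Lmap (A' p.1 + p.2 • (B' p.1 - A' p.1)) (B p.1 - A p.1)).det| = F p := by
    intro p
    rw [Lmap_det, det2_swap, abs_neg, hF_def]
  -- the image of the bad set is null
  have hbad0 : volume (Φ '' (D ∩ Bad)) = 0 := by
    apply addHaar_image_eq_zero_of_det_fderivWithin_eq_zero volume
      (f' := fun p => Lmap (A' p.1 + p.2 • (B' p.1 - A' p.1)) (B p.1 - A p.1))
      (fun p hp => (hder p hp.1).mono Set.inter_subset_left)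
    intro p hp
    have hz : B p.1 - A p.1 = 0 := hp.2.1.2
    rw [Lmap_det, hz]
    simp [det2]
  -- change of variables on the good set
  have hEG : ∫⁻ p in D \ Bad, ENNReal.ofReal (F p) = volume (Φ '' (D \ Bad)) := by
    have := lintegral_abs_det_fderiv_eq_addHaar_image volume hGmeas
      (fun p hp => (hder p hp.1).mono Set.diff_subset)
      (phi_inj t₀ t₁ A B hdisj)
    rw [← this]
    exact lintegral_congr fun p => by rw [habs_det]
  have hvol : volume (Φ '' D) = volume (Φ '' (D \ Bad)) := by
    refine le_antisymm ?_ (measure_mono (Set.image_mono Set.diff_subset))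
    have himg_split : Φ '' D = Φ '' (D \ Bad) ∪ Φ '' (D ∩ Bad) := by
      rw [← Set.image_union, Set.diff_union_inter]
    rw [himg_split]
    exact (measure_union_le _ _).trans (by rw [hbad0, add_zero])
  have hbadint : ∫⁻ p in D ∩ Bad, ENNReal.ofReal (F p) = 0 := by
    have : ∫⁻ p in D ∩ Bad, ENNReal.ofReal (F p)
        = ∫⁻ _ in D ∩ Bad, 0 := by
      apply setLIntegral_congr_fun (hDmeas.inter hBadmeas)
      intro p hp
      have hz : B p.1 - A p.1 = 0 := hp.2.1.2
      rw [hF_def]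
      simp [hz, det2]
    rw [this, lintegral_zero]
  have hlint : ∫⁻ p in D, ENNReal.ofReal (F p)
      = ∫⁻ p in D \ Bad, ENNReal.ofReal (F p) := by
    have hsplit : ∫⁻ p in (D \ Bad) ∪ (D ∩ Bad), ENNReal.ofReal (F p)
        = (∫⁻ p in D \ Bad, ENNReal.ofReal (F p)) + ∫⁻ p in D ∩ Bad, ENNReal.ofReal (F p) :=
      lintegral_union (hDmeas.inter hBadmeas) Set.disjoint_sdiff_inter
    rw [Set.diff_union_inter] at hsplit
    rw [hsplit, hbadint, add_zero]
  have step1 : volume (Φ '' D) = ∫⁻ p in D, ENNReal.ofReal (F p) := by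
    rw [hvol, ← hEG, hlint]
  -- integrability and continuity of the integrand
  have hmapsD : Set.MapsTo (Prod.fst : ℝ × ℝ → ℝ) D (Set.Icc t₀ t₁) := fun q hq => hq.1
  have hc2 : ContinuousOn (fun p : ℝ × ℝ => B p.1 - A p.1) D :=
    (hBc.comp continuous_fst.continuousOn hmapsD).sub
      (hAc.comp continuous_fst.continuousOn hmapsD)
  have hc1 : ContinuousOn (fun p : ℝ × ℝ => A' p.1 + p.2 • (B' p.1 - A' p.1)) D :=
    (hA'.comp continuous_fst.continuousOn hmapsD).add
      ((continuous_snd.continuousOn).smul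
        ((hB'.comp continuous_fst.continuousOn hmapsD).sub
          (hA'.comp continuous_fst.continuousOn hmapsD)))
  have hFc : ContinuousOn F D := by
    rw [hF_def]
    apply ContinuousOn.abs
    simp only [det2]
    exact ((continuous_fst.comp_continuousOn hc2).mul
        (continuous_snd.comp_continuousOn hc1)).sub
      ((continuous_snd.comp_continuousOn hc2).mul
        (continuous_fst.comp_continuousOn hc1))
  have hFint : IntegrableOn F D volume :=
    hFc.integrableOn_compact' (isCompact_Icc.prod isCompact_Icc) hDmeas
  have hnn : 0 ≤ᵐ[volume.restrict D] F :=
    Filter.Eventually.of_forall fun p => abs_nonneg _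
  have hlr : ENNReal.ofReal (∫ p in D, F p) = ∫⁻ p in D, ENNReal.ofReal (F p) :=
    ofReal_integral_eq_lintegral_ofReal hFint hnn
  -- Fubini
  have hprodeq : ∫ p in D, F p = ∫ t in Set.Icc t₀ t₁, ∫ s in Set.Icc (0:ℝ) 1, F (t, s) := by
    rw [hD_def, Measure.volume_eq_prod]
    apply setIntegral_prod
    rw [← Measure.volume_eq_prod]
    exact hFint
  -- the inner integral
  have hinner : ∀ t ∈ Set.Icc t₀ t₁,
      ∫ s in Set.Icc (0:ℝ) 1, F (t, s) = |det2 (B t - A t) (A' t + B' t)| / 2 := by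
    intro t ht
    have hsign := key_sign t₀ t₁ h A B A' B' hA hB hdisj t ht
    have hre : (fun s : ℝ => F (t, s))
        = fun s : ℝ => |det2 (B t - A t) (A' t)
            + s * det2 (B t - A t) (B' t - A' t)| := by
      funext s
      rw [hF_def]
      simp only
      rw [det2_add_smul]
    have hab : det2 (B t - A t) (A' t) + det2 (B t - A t) (B' t - A' t)
        = det2 (B t - A t) (B' t) := by
      simp [det2]; ring
    have h2 : ∫ s in Set.Icc (0:ℝ) 1, F (t, s)
        = |det2 (B t - A t) (A' t) + det2 (B t - A t) (B' t - A' t) / 2| := by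
      rw [show (fun s : ℝ => F (t, s)) = _ from hre]
      exact integral_abs_affine (by rw [hab]; exact hsign)
    rw [h2]
    rw [show det2 (B t - A t) (A' t) + det2 (B t - A t) (B' t - A' t) / 2
        = det2 (B t - A t) (A' t + B' t) / 2 from by simp [det2]; ring]
    rw [abs_div]
    norm_num
  -- put everything together
  calc (volume (⋃ t ∈ Set.Icc t₀ t₁, segment ℝ (A t) (B t))).toReal
      = (volume (Φ '' D)).toReal := by rw [phi_image t₀ t₁ A B]
    _ = (∫⁻ p in D, ENNReal.ofReal (F p)).toReal := by rw [step1]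
    _ = ∫ p in D, F p := by
        rw [← hlr, ENNReal.toReal_ofReal (setIntegral_nonneg hDmeas fun p _ => abs_nonneg _)]
    _ = ∫ t in Set.Icc t₀ t₁, ∫ s in Set.Icc (0:ℝ) 1, F (t, s) := hprodeq
    _ = ∫ t in Set.Icc t₀ t₁, |det2 (B t - A t) (A' t + B' t)| / 2 :=
        setIntegral_congr_fun measurableSet_Icc fun t ht => hinner t ht
    _ = (1 / 2) * ∫ t in t₀..t₁, |det2 (B t - A t) (A' t + B' t)| := by
        rw [intervalIntegral.integral_of_le h.le, ← integral_Icc_eq_integral_Ioc,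
          integral_div]
        ring
end

section
/- Let t₀ < t₁, let A : [t₀, t₁] → ℝ² and v : [t₀, t₁] → ℝ² be continuously differentiable, with v(t) tangent to the curve described by A at every parameter, i.e., det(v(t), A′(t)) = 0 for all t ∈ [t₀, t₁]. Assume the tangent segments [A(t), A(t) + v(t)] and [A(t′), A(t′) + v(t′)] are disjoint whenever t ≠ t′. Then the area of the tangent sweep ⋃_{t ∈ [t₀,t₁]} [A(t), A(t) + v(t)] equals (1/2) ∫_{t₀}^{t₁} |det(v(t), v′(t))| dt; in particular it depends only on the differences v(t) = B(t) − A(t) and not on the positions of the points A(t), B(t), so that the area of a tangent sweep of a curve equals the area of its corresponding tangent cluster. (Peano's case (3) of Theorem 47; Mamikon's theorem.) -/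
open MeasureTheory

/-- Peano's case (3) of Theorem 47 (Mamikon's theorem): if `v(t)` is tangent to
the curve `A` (`det(v(t), A′(t)) = 0`) and the tangent segments
`[A(t), A(t) + v(t)]` are pairwise disjoint, then the area of the tangent sweep
equals `(1/2) ∫ |det(v(t), v′(t))| dt`; in particular it depends only on the
vectors `v(t)` and not on the positions of the points `A(t)`, so the area of a
tangent sweep equals the area of its tangent cluster. -/
theorem peano_mamikon_tangent_sweep
    (t₀ t₁ : ℝ) (h : t₀ < t₁) (A v A' v' : ℝ → ℝ × ℝ)
    (hA : ∀ t ∈ Set.Icc t₀ t₁, HasDerivWithinAt A (A' t) (Set.Icc t₀ t₁) t)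
    (hv : ∀ t ∈ Set.Icc t₀ t₁, HasDerivWithinAt v (v' t) (Set.Icc t₀ t₁) t)
    (hA' : ContinuousOn A' (Set.Icc t₀ t₁))
    (hv' : ContinuousOn v' (Set.Icc t₀ t₁))
    (htan : ∀ t ∈ Set.Icc t₀ t₁, det2 (v t) (A' t) = 0)
    (hdisj : ∀ t ∈ Set.Icc t₀ t₁, ∀ t' ∈ Set.Icc t₀ t₁, t ≠ t' →
      Disjoint (segment ℝ (A t) (A t + v t)) (segment ℝ (A t') (A t' + v t'))) :
    (volume (⋃ t ∈ Set.Icc t₀ t₁, segment ℝ (A t) (A t + v t))).toReal =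
      (1 / 2) * ∫ t in t₀..t₁, |det2 (v t) (v' t)| := by
  set I : Set ℝ := Set.Icc t₀ t₁ with hI
  set Φ : ℝ × ℝ → ℝ × ℝ := fun p => A p.1 + p.2 • v p.1 with hΦ
  set D : ℝ × ℝ → (ℝ × ℝ →L[ℝ] ℝ × ℝ) := fun p =>
    ((ContinuousLinearMap.smulRight (1 : ℝ →L[ℝ] ℝ) (A' p.1)).comp
      (ContinuousLinearMap.fst ℝ ℝ ℝ)) +
    (p.2 • ((ContinuousLinearMap.smulRight (1 : ℝ →L[ℝ] ℝ) (v' p.1)).comp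
      (ContinuousLinearMap.fst ℝ ℝ ℝ)) +
      (ContinuousLinearMap.snd ℝ ℝ ℝ).smulRight (v p.1)) with hD
  set d : ℝ → ℝ := fun t => det2 (v t) (v' t) with hd
  set Z : Set ℝ := I ∩ v ⁻¹' {0} with hZ
  set R : Set (ℝ × ℝ) := I ×ˢ Set.Ioc (0:ℝ) 1 with hR
  set S : Set (ℝ × ℝ) := R \ (Z ×ˢ Set.univ) with hS
  set U : Set (ℝ × ℝ) := I ×ˢ (Set.univ : Set ℝ) with hU
  -- continuity facts
  have hvc : ContinuousOn v I := fun t ht => (hv t ht).continuousWithinAt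
  have hdc : ContinuousOn d I := by
    simp only [hd, det2]
    exact ((continuous_fst.comp_continuousOn hvc).mul
        (continuous_snd.comp_continuousOn hv')).sub
      ((continuous_snd.comp_continuousOn hvc).mul
        (continuous_fst.comp_continuousOn hv'))
  -- S is measurable
  have hZclosed : IsClosed Z := hvc.preimage_isClosed_of_isClosed isClosed_Icc
    isClosed_singleton
  have hRmeas : MeasurableSet R := measurableSet_Icc.prod measurableSet_Ioc
  have hSmeas : MeasurableSet S :=
    hRmeas.diff (hZclosed.measurableSet.prod MeasurableSet.univ)
  -- derivative of Φ
  have hΦderiv : ∀ p : ℝ × ℝ, p.1 ∈ I → HasFDerivWithinAt Φ (D p) U p := by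
    intro p hp
    have hfst : HasFDerivWithinAt (Prod.fst : ℝ × ℝ → ℝ)
        (ContinuousLinearMap.fst ℝ ℝ ℝ) U p := hasFDerivAt_fst.hasFDerivWithinAt
    have hmaps : Set.MapsTo (Prod.fst : ℝ × ℝ → ℝ) U I := fun q hq => hq.1
    have h1 : HasFDerivWithinAt (fun q : ℝ × ℝ => A q.1)
        ((ContinuousLinearMap.smulRight (1 : ℝ →L[ℝ] ℝ) (A' p.1)).comp
          (ContinuousLinearMap.fst ℝ ℝ ℝ)) U p :=
      ((hA p.1 hp).hasFDerivWithinAt).comp p hfst hmaps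
    have h2 : HasFDerivWithinAt (fun q : ℝ × ℝ => v q.1)
        ((ContinuousLinearMap.smulRight (1 : ℝ →L[ℝ] ℝ) (v' p.1)).comp
          (ContinuousLinearMap.fst ℝ ℝ ℝ)) U p :=
      ((hv p.1 hp).hasFDerivWithinAt).comp p hfst hmaps
    have hsnd : HasFDerivWithinAt (fun q : ℝ × ℝ => q.2)
        (ContinuousLinearMap.snd ℝ ℝ ℝ) U p := hasFDerivAt_snd.hasFDerivWithinAt
    exact h1.add (hsnd.smul h2)
  -- determinant of D
  have hdet : ∀ p : ℝ × ℝ, p.1 ∈ I → (D p).det = - (p.2 * d p.1) := by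
    intro p hp
    have hb := LinearMap.det_toMatrix (Module.Basis.finTwoProd ℝ) ((D p) : ℝ × ℝ →ₗ[ℝ] ℝ × ℝ)
    rw [ContinuousLinearMap.det, ← hb, Matrix.det_fin_two]
    simp only [LinearMap.toMatrix_apply, Module.Basis.finTwoProd_zero, Module.Basis.finTwoProd_one,
      Module.Basis.coe_finTwoProd_repr, ContinuousLinearMap.coe_coe, hD,
      ContinuousLinearMap.add_apply, ContinuousLinearMap.coe_comp',
      Function.comp_apply, ContinuousLinearMap.coe_fst', ContinuousLinearMap.coe_snd',
      ContinuousLinearMap.smulRight_apply, ContinuousLinearMap.one_apply,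
      ContinuousLinearMap.smul_apply, Matrix.cons_val_zero, Matrix.cons_val_one,
      Matrix.head_cons, Prod.fst_add, Prod.snd_add, Prod.smul_fst, Prod.smul_snd,
      smul_eq_mul]
    have := htan p.1 hp
    simp only [det2] at this ⊢
    simp only [hd, det2]
    ring_nf
    nlinarith [this]
  -- injectivity
  have hseg : ∀ t ∈ I, ∀ s : ℝ, s ∈ Set.Icc (0:ℝ) 1 →
      A t + s • v t ∈ segment ℝ (A t) (A t + v t) := by
    intro t ht s hs
    rw [segment_eq_image']
    exact ⟨s, hs, by simp⟩
  have hinj : Set.InjOn Φ S := by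
    intro p hp q hq hpq
    have hp1 : p.1 ∈ I := hp.1.1
    have hq1 : q.1 ∈ I := hq.1.1
    by_cases h12 : p.1 = q.1
    · have hvne : v p.1 ≠ 0 := by
        intro hv0
        exact hp.2 ⟨⟨hp1, hv0⟩, Set.mem_univ _⟩
      have : p.2 • v p.1 = q.2 • v q.1 := by
        have := hpq
        simp only [hΦ, h12] at this ⊢
        exact add_left_cancel this
      rw [← h12] at this
      have h2 : (p.2 - q.2) • v p.1 = 0 := by
        rw [sub_smul, this, sub_self]
      rcases smul_eq_zero.mp h2 with h0 | h0
      · exact Prod.ext h12 (by linarith [sub_eq_zero.mp (by exact_mod_cast h0)])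
      · exact absurd h0 hvne
    · exfalso
      have hmem1 : Φ p ∈ segment ℝ (A p.1) (A p.1 + v p.1) :=
        hseg p.1 hp1 p.2 ⟨hp.1.2.1.le, hp.1.2.2⟩
      have hmem2 : Φ q ∈ segment ℝ (A q.1) (A q.1 + v q.1) :=
        hseg q.1 hq1 q.2 ⟨hq.1.2.1.le, hq.1.2.2⟩
      rw [← hpq] at hmem2
      exact Set.disjoint_left.mp (hdisj p.1 hp1 q.1 hq1 h12) hmem1 hmem2
  -- change of variables
  have hkey : (∫⁻ p in S, ENNReal.ofReal |(D p).det|) = volume (Φ '' S) :=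
    lintegral_abs_det_fderiv_eq_addHaar_image volume hSmeas
      (fun p hp => (hΦderiv p hp.1.1).mono (fun q hq => ⟨hq.1.1, Set.mem_univ _⟩))
      hinj
    -- the curve A has null image
  have hAnull : volume (A '' I) = 0 := by
    have himg : A '' I = Φ '' (I ×ˢ ({0} : Set ℝ)) := by
      ext x
      constructor
      · rintro ⟨t, ht, rfl⟩
        exact ⟨(t, 0), ⟨ht, rfl⟩, by simp [hΦ]⟩
      · rintro ⟨⟨t, s⟩, ⟨ht, hs⟩, rfl⟩
        simp only [Set.mem_singleton_iff] at hs
        exact ⟨t, ht, by simp [hΦ, hs]⟩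
    rw [himg]
    apply addHaar_image_eq_zero_of_differentiableOn_of_addHaar_eq_zero
      (volume : Measure (ℝ × ℝ))
    · intro p hp
      exact ((hΦderiv p hp.1).mono (fun q hq => ⟨hq.1, Set.mem_univ _⟩)).differentiableWithinAt
    · rw [Measure.volume_eq_prod, Measure.prod_prod, Real.volume_singleton, mul_zero]
  -- sweep decomposition
  have hsub1 : Φ '' S ⊆ ⋃ t ∈ I, segment ℝ (A t) (A t + v t) := by
    rintro x ⟨p, hp, rfl⟩
    exact Set.mem_biUnion hp.1.1 (hseg p.1 hp.1.1 p.2 ⟨hp.1.2.1.le, hp.1.2.2⟩)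
  have hsub2 : (⋃ t ∈ I, segment ℝ (A t) (A t + v t)) ⊆ Φ '' S ∪ A '' I := by
    intro x hx
    rcases Set.mem_iUnion₂.mp hx with ⟨t, ht, hxt⟩
    rw [segment_eq_image'] at hxt
    rcases hxt with ⟨s, hs, rfl⟩
    rw [add_sub_cancel_left]
    by_cases hv0 : v t = 0
    · exact Or.inr ⟨t, ht, by simp [hv0]⟩
    by_cases hs0 : s = 0
    · exact Or.inr ⟨t, ht, by simp [hs0]⟩
    · exact Or.inl ⟨(t, s), ⟨⟨ht, ⟨lt_of_le_of_ne hs.1 (Ne.symm hs0), hs.2⟩⟩,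
        fun hz => hv0 hz.1.2⟩, rfl⟩
  have hvol : volume (⋃ t ∈ I, segment ℝ (A t) (A t + v t)) = volume (Φ '' S) := by
    refine le_antisymm ?_ (measure_mono hsub1)
    calc volume (⋃ t ∈ I, segment ℝ (A t) (A t + v t))
        ≤ volume (Φ '' S ∪ A '' I) := measure_mono hsub2
      _ ≤ volume (Φ '' S) + volume (A '' I) := measure_union_le _ _
      _ = volume (Φ '' S) := by rw [hAnull, add_zero]
  -- rewrite the integrand on S
  have hint1 : (∫⁻ p in S, ENNReal.ofReal |(D p).det|)
      = ∫⁻ p in S, ENNReal.ofReal |d p.1| * ENNReal.ofReal p.2 := by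
    apply setLIntegral_congr_fun hSmeas
    intro p hp
    beta_reduce
    rw [hdet p hp.1.1, abs_neg, abs_mul, abs_of_pos hp.1.2.1,
      ENNReal.ofReal_mul' (abs_nonneg _), mul_comm]
  have hzero : (∫⁻ p in R \ S, ENNReal.ofReal |d p.1| * ENNReal.ofReal p.2) = 0 := by
    have hz : ∀ p ∈ R \ S, ENNReal.ofReal |d p.1| * ENNReal.ofReal p.2 = (0 : ENNReal) := by
      intro p hp
      have hpZ : p ∈ Z ×ˢ (Set.univ : Set ℝ) := by
        by_contra hzz
        exact hp.2 ⟨hp.1, hzz⟩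
      have hv0 : v p.1 = 0 := hpZ.1.2
      have : d p.1 = 0 := by simp [hd, det2, hv0]
      simp [this]
    rw [setLIntegral_congr_fun (hRmeas.diff hSmeas) (hz : Set.EqOn _ (fun _ => (0 : ENNReal)) (R \ S))]
    simp
  have hSR : S ⊆ R := Set.diff_subset
  have hsplit : (∫⁻ p in R, ENNReal.ofReal |d p.1| * ENNReal.ofReal p.2)
      = ∫⁻ p in S, ENNReal.ofReal |d p.1| * ENNReal.ofReal p.2 := by
    rw [← Set.union_diff_cancel hSR,
      lintegral_union (hRmeas.diff hSmeas) Set.disjoint_sdiff_right, hzero, add_zero]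
  have hprod : (∫⁻ p in R, ENNReal.ofReal |d p.1| * ENNReal.ofReal p.2)
      = (∫⁻ t in I, ENNReal.ofReal |d t|) * ∫⁻ s in Set.Ioc (0:ℝ) 1, ENNReal.ofReal s := by
    rw [hR, Measure.volume_eq_prod, ← Measure.prod_restrict]
    exact lintegral_prod_mul
      ((ENNReal.continuous_ofReal.comp_continuousOn hdc.abs).aemeasurable measurableSet_Icc)
      ENNReal.measurable_ofReal.aemeasurable
  have hhalf : (∫⁻ s in Set.Ioc (0:ℝ) 1, ENNReal.ofReal s) = ENNReal.ofReal (1/2) := by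
    rw [← ofReal_integral_eq_lintegral_ofReal]
    · congr 1
      rw [← intervalIntegral.integral_of_le (zero_le_one' ℝ), integral_id]
      norm_num
    · exact continuous_id.integrableOn_Ioc
    · filter_upwards [ae_restrict_mem measurableSet_Ioc] with x hx using hx.1.le
  have hIcc : (∫⁻ t in I, ENNReal.ofReal |d t|) = ENNReal.ofReal (∫ t in I, |d t|) := by
    rw [← ofReal_integral_eq_lintegral_ofReal]
    · exact hdc.abs.integrableOn_compact isCompact_Icc
    · exact ae_of_all _ fun t => abs_nonneg _
  have hIcc2 : (∫ t in I, |d t|) = ∫ t in t₀..t₁, |d t| := by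
    rw [hI, MeasureTheory.integral_Icc_eq_integral_Ioc,
      ← intervalIntegral.integral_of_le h.le]
  have hnn : 0 ≤ ∫ t in t₀..t₁, |d t| :=
    intervalIntegral.integral_nonneg h.le fun t _ => abs_nonneg _
  rw [hvol, ← hkey, hint1, ← hsplit, hprod, hhalf, hIcc, hIcc2,
    ← ENNReal.ofReal_mul hnn, ENNReal.toReal_ofReal (by positivity)]
  ring
end

section
/- Let U ⊆ ℝ² be open, let σ : U → ℝ³ be continuously differentiable, and let (x, y) ∈ U. For ε > 0 small enough that [x, x+ε] × [y, y+ε] ⊆ U, define the bi-vector of the image of the counterclockwise oriented boundary ∂⁺Q_ε of the square Q_ε = [x, x+ε] × [y, y+ε] by b(ε) := (1/2)[∫₀^ε σ(x+s, y) ×ᵥ ∂₁σ(x+s, y) ds + ∫₀^ε σ(x+ε, y+s) ×ᵥ ∂₂σ(x+ε, y+s) ds − ∫₀^ε σ(x+s, y+ε) ×ᵥ ∂₁σ(x+s, y+ε) ds − ∫₀^ε σ(x, y+s) ×ᵥ ∂₂σ(x, y+s) ds]. Then ‖b(ε)‖ / ε² → ‖∂₁σ(x, y) ×ᵥ ∂₂σ(x,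 y)‖ as ε → 0⁺. (The quantitative content of Peano's theorem that the ratio between the magnitude of the bi-vector of an infinitesimal piece of surface and the area of that piece tends to 1, the area of σ(Q_ε) being asymptotic to ε²‖∂₁σ ×ᵥ ∂₂σ‖.) -/
open Matrix Filter

namespace PeanoAux

local notation "E3" => EuclideanSpace ℝ (Fin 3)

lemma coord_le_norm (u : E3) (i : Fin 3) : |u i| ≤ ‖u‖ := by
  rw [EuclideanSpace.norm_eq]
  rw [← Real.sqrt_sq_eq_abs]
  apply Real.sqrt_le_sqrt
  have : |u i| ^ 2 ≤ ∑ j, ‖u j‖ ^ 2 := by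
    have := Finset.single_le_sum (f := fun j => ‖u j‖ ^ 2)
      (fun j _ => by positivity) (Finset.mem_univ i)
    simpa [sq_abs] using this
  simpa [sq_abs] using this

lemma cross3_norm_le (u v : E3) : ‖cross3 u v‖ ≤ 4 * ‖u‖ * ‖v‖ := by
  have hcoord : ∀ i : Fin 3, |(cross3 u v) i| ≤ 2 * ‖u‖ * ‖v‖ := by
    intro i
    have h0 : ∀ (a : E3) (j : Fin 3), |a j| ≤ ‖a‖ := coord_le_norm
    have huv : ∀ (j k : Fin 3), |u j * v k| ≤ ‖u‖ * ‖v‖ := by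
      intro j k
      rw [abs_mul]
      exact mul_le_mul (h0 u j) (h0 v k) (abs_nonneg _) (norm_nonneg _)
    have : (cross3 u v) i = crossProduct ((WithLp.equiv 2 (Fin 3 → ℝ)) u)
        ((WithLp.equiv 2 (Fin 3 → ℝ)) v) i := rfl
    rw [this, cross_apply]
    fin_cases i <;> simp only [Matrix.cons_val_zero, Matrix.cons_val_one, Matrix.head_cons,
      Matrix.cons_val_two, Matrix.tail_cons] <;>
    · refine (abs_sub _ _).trans ?_
      have h1 := huv
      calc _ ≤ ‖u‖ * ‖v‖ + ‖u‖ * ‖v‖ := add_le_add (huv _ _) (huv _ _)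
        _ = 2 * ‖u‖ * ‖v‖ := by ring
  have hn : ‖cross3 u v‖ ≤ Real.sqrt (3 * (2 * ‖u‖ * ‖v‖) ^ 2) := by
    rw [EuclideanSpace.norm_eq]
    apply Real.sqrt_le_sqrt
    rw [Fin.sum_univ_three]
    have h1 := hcoord 0; have h2 := hcoord 1; have h3 := hcoord 2
    have e1 : ‖(cross3 u v) 0‖ = |(cross3 u v) 0| := rfl
    have sq1 : ∀ a b : ℝ, |a| ≤ b → ‖a‖ ^ 2 ≤ b ^ 2 := by
      intro a b h
      rw [Real.norm_eq_abs]
      nlinarith [abs_nonneg a]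
    nlinarith [sq1 _ _ h1, sq1 _ _ h2, sq1 _ _ h3]
  refine hn.trans ?_
  have : (3 : ℝ) * (2 * ‖u‖ * ‖v‖) ^ 2 ≤ (4 * ‖u‖ * ‖v‖) ^ 2 := by nlinarith [norm_nonneg u, norm_nonneg v, mul_nonneg (norm_nonneg u) (norm_nonneg v)]
  refine (Real.sqrt_le_sqrt this).trans ?_
  rw [Real.sqrt_sq (by positivity)]

noncomputable def crossL : E3 →ₗ[ℝ] E3 →ₗ[ℝ] E3 :=
  LinearMap.mk₂ ℝ cross3
    (fun u u' v => by simp [cross3, map_add, LinearMap.add_apply])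
    (fun c u v => by simp [cross3, _root_.map_smul, LinearMap.smul_apply])
    (fun u v v' => by simp [cross3, map_add])
    (fun c u v => by simp [cross3, _root_.map_smul])

noncomputable def B : E3 →L[ℝ] E3 →L[ℝ] E3 :=
  LinearMap.mkContinuous₂ crossL 4 (fun u v => cross3_norm_le u v)

@[simp] lemma B_apply (u v : E3) : B u v = cross3 u v := rfl

lemma B_self (u : E3) : B u u = 0 := by
  simp [cross3, cross_self]

lemma B_anticomm (u v : E3) : B v u = - B u v := by
  simp only [B_apply, cross3]
  rw [← cross_anticomm]
  rfl

lemma norm_B_le (u v : E3) : ‖B u v‖ ≤ 4 * ‖u‖ * ‖v‖ := cross3_norm_le u v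

lemma B_smul_left (a : ℝ) (x y : E3) : B (a • x) y = a • B x y := by
  rw [_root_.map_smul, ContinuousLinearMap.smul_apply]

lemma B_add_left (x x' y : E3) : B (x + x') y = B x y + B x' y := by
  rw [map_add, ContinuousLinearMap.add_apply]

lemma B_sub_B (a a' b b' : E3) : B a b - B a' b' = B (a - a') b + B a' (b - b') := by
  simp only [map_sub, ContinuousLinearMap.sub_apply, ContinuousLinearMap.coe_sub']
  abel

end PeanoAux

set_option maxHeartbeats 2000000 in
/-- Peano: the ratio between the magnitude of the bi-vector of an infinitesimal
piece of a C¹ surface and the area of that piece tends to 1.  Quantitatively: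
if `b(ε)` is the bi-vector of the image under `σ` of the counterclockwise
boundary of the square `[x, x+ε] × [y, y+ε]`, then
`‖b(ε)‖/ε² → ‖∂₁σ(x,y) ×ᵥ ∂₂σ(x,y)‖` as `ε → 0⁺`. -/
theorem peano_infinitesimal_bivector_area
    (U : Set (ℝ × ℝ)) (hU : IsOpen U)
    (σ : ℝ × ℝ → EuclideanSpace ℝ (Fin 3)) (hσ : ContDiffOn ℝ 1 σ U)
    (x y : ℝ) (hxy : (x, y) ∈ U) :
    Tendsto (fun ε : ℝ =>
        ‖(1 / 2 : ℝ) •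
          ((∫ s in (0:ℝ)..ε, cross3 (σ (x + s, y)) (fderiv ℝ σ (x + s, y) (1, 0))) +
            (∫ s in (0:ℝ)..ε, cross3 (σ (x + ε, y + s)) (fderiv ℝ σ (x + ε, y + s) (0, 1))) -
            (∫ s in (0:ℝ)..ε, cross3 (σ (x + s, y + ε)) (fderiv ℝ σ (x + s, y + ε) (1, 0))) -
            (∫ s in (0:ℝ)..ε, cross3 (σ (x, y + s)) (fderiv ℝ σ (x, y + s) (0, 1))))‖ / ε ^ 2)
      (nhdsWithin 0 (Set.Ioi 0))
      (nhds ‖cross3 (fderiv ℝ σ (x, y) (1, 0)) (fderiv ℝ σ (x, y) (0, 1))‖) := by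
  classical
  open PeanoAux in
  simp only [← PeanoAux.B_apply]
  set D := fderiv ℝ σ (x, y) with hDdef
  set u := D (1, 0) with hudef
  set v := D (0, 1) with hvdef
  set c := σ (x, y) with hcdef
  set M := ‖D‖ + 1 with hMdef
  have hM1 : 1 ≤ M := le_add_of_nonneg_left (norm_nonneg _)
  have hM0 : 0 < M := lt_of_lt_of_le one_pos hM1
  have hdiff : ∀ p ∈ U, DifferentiableAt ℝ σ p := fun p hp =>
    (hσ.differentiableOn one_ne_zero).differentiableAt (hU.mem_nhds hp)
  have hfc : ContinuousOn (fderiv ℝ σ) U := hσ.continuousOn_fderiv_of_isOpen hU le_rfl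
  have hσc : ContinuousOn σ U := hσ.continuousOn
  -- reduce to the smul form
  suffices H : Tendsto (fun ε : ℝ => (ε ^ 2)⁻¹ • ((1 / 2 : ℝ) •
          ((∫ s in (0:ℝ)..ε, PeanoAux.B (σ (x + s, y)) (fderiv ℝ σ (x + s, y) (1, 0))) +
            (∫ s in (0:ℝ)..ε, PeanoAux.B (σ (x + ε, y + s)) (fderiv ℝ σ (x + ε, y + s) (0, 1))) -
            (∫ s in (0:ℝ)..ε, PeanoAux.B (σ (x + s, y + ε)) (fderiv ℝ σ (x + s, y + ε) (1, 0))) -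
            (∫ s in (0:ℝ)..ε, PeanoAux.B (σ (x, y + s)) (fderiv ℝ σ (x, y + s) (0, 1))))))
      (nhdsWithin 0 (Set.Ioi 0)) (nhds (PeanoAux.B u v)) by
    refine Tendsto.congr' ?_ H.norm
    filter_upwards [self_mem_nhdsWithin] with ε (hε : ε ∈ Set.Ioi 0)
    rw [norm_smul, Real.norm_eq_abs, abs_of_pos (by have h : (0:ℝ) < ε := hε; positivity),
      inv_mul_eq_div]
  rw [Metric.tendsto_nhdsWithin_nhds]
  intro θ hθ
  set η := min 1 (θ / (64 * M)) with hηdef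
  have hη0 : 0 < η := lt_min one_pos (div_pos hθ (by linarith))
  have hη1 : η ≤ 1 := min_le_left _ _
  have hηθ : 16 * M * η < θ := by
    have h2 : η ≤ θ / (64 * M) := min_le_right _ _
    have : 16 * M * η ≤ 16 * M * (θ / (64 * M)) := by
      apply mul_le_mul_of_nonneg_left h2 (by positivity)
    have heq : 16 * M * (θ / (64 * M)) = θ / 4 := by field_simp; ring
    rw [heq] at this
    exact lt_of_le_of_lt this (by linarith)
  -- choose the radius
  have hcontD : ContinuousAt (fderiv ℝ σ) (x, y) := hfc.continuousAt (hU.mem_nhds hxy)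
  obtain ⟨δ, hδ0, hδ⟩ := Metric.continuousAt_iff.mp hcontD η hη0
  obtain ⟨ρ, hρ0, hρU⟩ := Metric.isOpen_iff.mp hU (x, y) hxy
  set r := min (δ / 2) (ρ / 2) with hrdef
  have hr0 : 0 < r := lt_min (by linarith) (by linarith)
  have hballU : Metric.closedBall (x, y) r ⊆ U := fun p hp => by
    apply hρU
    have : dist p (x, y) ≤ r := hp
    exact lt_of_le_of_lt (this.trans (min_le_right _ _)) (by linarith)
  have hballD : ∀ p ∈ Metric.closedBall (x, y) r, ‖fderiv ℝ σ p - D‖ ≤ η := by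
    intro p hp
    have h1 : dist p (x, y) < δ :=
      lt_of_le_of_lt ((Metric.mem_closedBall.mp hp).trans (min_le_left _ _)) (by linarith)
    have := hδ h1
    rw [dist_eq_norm] at this
    exact this.le
  refine ⟨r, hr0, ?_⟩
  intro ε hεIoi hεd
  have hε0 : 0 < ε := hεIoi
  have hεr : ε ≤ r := by
    have : dist ε 0 < r := hεd
    rw [Real.dist_eq, sub_zero, abs_of_pos hε0] at this
    exact this.le
  have hIcc : Set.uIcc (0:ℝ) ε = Set.Icc 0 ε := Set.uIcc_of_le hε0.le
  have hIoc : Set.uIoc (0:ℝ) ε = Set.Ioc 0 ε := Set.uIoc_of_le hε0.le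
  -- memberships
  have hmemB : ∀ a b : ℝ, |a - x| ≤ ε → |b - y| ≤ ε →
      ((a, b) : ℝ × ℝ) ∈ Metric.closedBall (x, y) r := by
    intro a b ha hb
    rw [Metric.mem_closedBall, Prod.dist_eq]
    exact max_le ((by rw [Real.dist_eq]; exact ha.trans hεr))
      ((by rw [Real.dist_eq]; exact hb.trans hεr))
  have hqnorm : ∀ a b : ℝ, |a - x| ≤ ε → |b - y| ≤ ε →
      ‖((a, b) : ℝ × ℝ) - ((x, y) : ℝ × ℝ)‖ ≤ ε := by
    intro a b ha hb
    rw [Prod.mk_sub_mk, Prod.norm_def]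
    exact max_le ha hb
  have habs_s : ∀ s : ℝ, s ∈ Set.Icc (0:ℝ) ε → |x + s - x| ≤ ε := by
    intro s hs; rw [add_sub_cancel_left, abs_of_nonneg hs.1]; exact hs.2
  have habs_s' : ∀ s : ℝ, s ∈ Set.Icc (0:ℝ) ε → |y + s - y| ≤ ε := by
    intro s hs; rw [add_sub_cancel_left, abs_of_nonneg hs.1]; exact hs.2
  have habs_e : |x + ε - x| ≤ ε := by rw [add_sub_cancel_left, abs_of_nonneg hε0.le]
  have habs_e' : |y + ε - y| ≤ ε := by rw [add_sub_cancel_left, abs_of_nonneg hε0.le]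
  have habs_0 : |x - x| ≤ ε := by rw [sub_self, abs_zero]; exact hε0.le
  have habs_0' : |y - y| ≤ ε := by rw [sub_self, abs_zero]; exact hε0.le
  -- mean value estimate
  have hkey : ∀ p ∈ Metric.closedBall (x, y) r,
      ‖σ p - c - D (p - (x, y))‖ ≤ η * ‖p - ((x, y) : ℝ × ℝ)‖ := by
    intro p hp
    have hmvt := (convex_closedBall ((x, y) : ℝ × ℝ) r).norm_image_sub_le_of_norm_hasFDerivWithin_le
      (f := fun q => σ q - D q) (f' := fun q => fderiv ℝ σ q - D)
      (fun q hq => ((hdiff q (hballU hq)).hasFDerivAt.sub D.hasFDerivAt).hasFDerivWithinAt)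
      (fun q hq => hballD q hq)
      (Metric.mem_closedBall_self hr0.le) hp
    have heq : σ p - D p - (σ (x, y) - D (x, y)) = σ p - c - D (p - (x, y)) := by
      rw [map_sub, hcdef]; abel
    rwa [heq] at hmvt
  -- operator norm facts
  have hbnorm : ∀ p ∈ Metric.closedBall (x, y) r, ∀ d : ℝ × ℝ, ‖d‖ ≤ 1 →
      ‖fderiv ℝ σ p d‖ ≤ M := by
    intro p hp d hd
    calc ‖fderiv ℝ σ p d‖ ≤ ‖fderiv ℝ σ p‖ * ‖d‖ := (fderiv ℝ σ p).le_opNorm d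
      _ ≤ ‖fderiv ℝ σ p‖ * 1 := by
          apply mul_le_mul_of_nonneg_left hd (norm_nonneg _)
      _ = ‖fderiv ℝ σ p‖ := mul_one _
      _ ≤ ‖D‖ + ‖fderiv ℝ σ p - D‖ := by
          have := norm_sub_norm_le (fderiv ℝ σ p) D
          linarith [norm_sub_norm_le (fderiv ℝ σ p) D]
      _ ≤ ‖D‖ + η := by linarith [hballD p hp]
      _ ≤ M := by rw [hMdef]; linarith
  have hbdiff : ∀ p ∈ Metric.closedBall (x, y) r, ∀ d : ℝ × ℝ, ‖d‖ ≤ 1 →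
      ‖fderiv ℝ σ p d - D d‖ ≤ η := by
    intro p hp d hd
    have : fderiv ℝ σ p d - D d = (fderiv ℝ σ p - D) d := by
      rw [ContinuousLinearMap.sub_apply]
    rw [this]
    calc ‖(fderiv ℝ σ p - D) d‖ ≤ ‖fderiv ℝ σ p - D‖ * ‖d‖ := ContinuousLinearMap.le_opNorm _ d
      _ ≤ η * 1 := mul_le_mul (hballD p hp) hd (norm_nonneg _) hη0.le
      _ = η := mul_one _
  have hDnorm : ∀ z : ℝ × ℝ, ‖D z‖ ≤ M * ‖z‖ := by
    intro z
    calc ‖D z‖ ≤ ‖D‖ * ‖z‖ := D.le_opNorm z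
      _ ≤ M * ‖z‖ := mul_le_mul_of_nonneg_right (by rw [hMdef]; linarith) (norm_nonneg _)
  -- the pointwise estimate
  have hpt : ∀ (p d : ℝ × ℝ), p ∈ Metric.closedBall (x, y) r → ‖d‖ ≤ 1 →
      ‖p - ((x, y) : ℝ × ℝ)‖ ≤ ε →
      ‖PeanoAux.B (σ p - c) (fderiv ℝ σ p d) - PeanoAux.B (D (p - (x, y))) (D d)‖
        ≤ 8 * M * η * ε := by
    intro p d hp hd hq
    rw [PeanoAux.B_sub_B]
    refine (norm_add_le _ _).trans ?_
    have e1 : ‖PeanoAux.B (σ p - c - D (p - (x, y))) (fderiv ℝ σ p d)‖ ≤ 4 * M * η * ε := by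
      refine (PeanoAux.norm_B_le _ _).trans ?_
      have h1 : ‖σ p - c - D (p - (x, y))‖ ≤ η * ε :=
        (hkey p hp).trans (mul_le_mul_of_nonneg_left hq hη0.le)
      have h2 : ‖fderiv ℝ σ p d‖ ≤ M := hbnorm p hp d hd
      have hn2 : (0:ℝ) ≤ ‖fderiv ℝ σ p d‖ := norm_nonneg _
      calc 4 * ‖σ p - c - D (p - (x, y))‖ * ‖fderiv ℝ σ p d‖
          ≤ 4 * (η * ε) * ‖fderiv ℝ σ p d‖ := by
            apply mul_le_mul_of_nonneg_right _ hn2; linarith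
        _ ≤ 4 * (η * ε) * M := mul_le_mul_of_nonneg_left h2
            (mul_nonneg (by norm_num) (mul_nonneg hη0.le hε0.le))
        _ = 4 * M * η * ε := by ring
    have e2 : ‖PeanoAux.B (D (p - (x, y))) (fderiv ℝ σ p d - D d)‖ ≤ 4 * M * η * ε := by
      refine (PeanoAux.norm_B_le _ _).trans ?_
      have h1 : ‖D (p - (x, y))‖ ≤ M * ε :=
        (hDnorm _).trans (mul_le_mul_of_nonneg_left hq hM0.le)
      have h2 : ‖fderiv ℝ σ p d - D d‖ ≤ η := hbdiff p hp d hd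
      have hn2 : (0:ℝ) ≤ ‖fderiv ℝ σ p d - D d‖ := norm_nonneg _
      calc 4 * ‖D (p - (x, y))‖ * ‖fderiv ℝ σ p d - D d‖
          ≤ 4 * (M * ε) * ‖fderiv ℝ σ p d - D d‖ := by
            apply mul_le_mul_of_nonneg_right _ hn2; linarith
        _ ≤ 4 * (M * ε) * η := mul_le_mul_of_nonneg_left h2
            (mul_nonneg (by norm_num) (mul_nonneg hM0.le hε0.le))
        _ = 4 * M * η * ε := by ring
    linarith [e1, e2]
  have hd10 : ‖((1:ℝ), (0:ℝ))‖ ≤ 1 := by rw [Prod.norm_def]; simp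
  have hd01 : ‖((0:ℝ), (1:ℝ))‖ ≤ 1 := by rw [Prod.norm_def]; simp
  -- D on specific vectors
  have hD_s0 : ∀ s : ℝ, D ((s, 0) : ℝ × ℝ) = s • u := by
    intro s
    rw [show ((s, (0:ℝ)) : ℝ × ℝ) = s • ((1:ℝ), (0:ℝ)) by simp [Prod.ext_iff], D.map_smul]
  have hD_0s : ∀ s : ℝ, D ((0, s) : ℝ × ℝ) = s • v := by
    intro s
    rw [show (((0:ℝ), s) : ℝ × ℝ) = s • ((0:ℝ), (1:ℝ)) by simp [Prod.ext_iff], D.map_smul]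
  have hD_es : ∀ s : ℝ, D ((ε, s) : ℝ × ℝ) = ε • u + s • v := by
    intro s
    rw [show ((ε, s) : ℝ × ℝ) = ε • ((1:ℝ), (0:ℝ)) + s • ((0:ℝ), (1:ℝ)) by
      simp [Prod.ext_iff], D.map_add, D.map_smul, D.map_smul]
  have hD_se : ∀ s : ℝ, D ((s, ε) : ℝ × ℝ) = s • u + ε • v := by
    intro s
    rw [show ((s, ε) : ℝ × ℝ) = s • ((1:ℝ), (0:ℝ)) + ε • ((0:ℝ), (1:ℝ)) by
      simp [Prod.ext_iff], D.map_add, D.map_smul, D.map_smul]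
  have hBcont : Continuous fun p : (EuclideanSpace ℝ (Fin 3)) × (EuclideanSpace ℝ (Fin 3)) =>
      PeanoAux.B p.1 p.2 := PeanoAux.B.continuous₂
    -- ## Side 1
  have hφ1 : Continuous fun s : ℝ => ((x + s, y) : ℝ × ℝ) := by fun_prop
  have hmemU1 : ∀ s ∈ Set.uIcc (0:ℝ) ε, ((x + s, y) : ℝ × ℝ) ∈ U := by
    intro s hs
    rw [hIcc] at hs
    exact hballU (hmemB (x + s) y (habs_s s hs) habs_0')
  have hcσ1 : ContinuousOn (fun s : ℝ => σ (x + s, y)) (Set.uIcc (0:ℝ) ε) :=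
    hσc.comp hφ1.continuousOn hmemU1
  have hcD1 : ContinuousOn (fun s : ℝ => fderiv ℝ σ (x + s, y)) (Set.uIcc (0:ℝ) ε) :=
    hfc.comp hφ1.continuousOn hmemU1
  have hcb1 : ContinuousOn (fun s : ℝ => fderiv ℝ σ (x + s, y) (1, 0)) (Set.uIcc (0:ℝ) ε) :=
    (ContinuousLinearMap.apply ℝ (EuclideanSpace ℝ (Fin 3))
      (((1, 0) : ℝ × ℝ))).continuous.comp_continuousOn hcD1
  have hib1 : IntervalIntegrable (fun s : ℝ => fderiv ℝ σ (x + s, y) (1, 0))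
      MeasureTheory.volume 0 ε := hcb1.intervalIntegrable
  have hintJ1 : IntervalIntegrable
      (fun s : ℝ => PeanoAux.B (σ (x + s, y) - c) (fderiv ℝ σ (x + s, y) (1, 0)))
      MeasureTheory.volume 0 ε :=
    (ContinuousOn.clm_apply (PeanoAux.B.continuous.comp_continuousOn (hcσ1.sub continuousOn_const) :
      ContinuousOn (fun s : ℝ => PeanoAux.B (σ (x + s, y) - c)) (Set.uIcc (0:ℝ) ε)) hcb1).intervalIntegrable
  have hintBc1 : IntervalIntegrable
      (fun s : ℝ => PeanoAux.B c (fderiv ℝ σ (x + s, y) (1, 0))) MeasureTheory.volume 0 ε :=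
    (ContinuousOn.clm_apply continuousOn_const hcb1).intervalIntegrable
  have hderiv1 : ∀ s ∈ Set.uIcc (0:ℝ) ε,
      HasDerivAt (fun s : ℝ => σ (x + s, y)) (fderiv ℝ σ (x + s, y) (1, 0)) s := by
    intro s hs
    have hline : HasDerivAt (fun s : ℝ => ((x + s, y) : ℝ × ℝ)) ((1, 0) : ℝ × ℝ) s := HasDerivAt.prodMk ((hasDerivAt_id s).const_add x) (hasDerivAt_const s y)
    exact (hdiff _ (hmemU1 s hs)).hasFDerivAt.comp_hasDerivAt s hline
  have hFTC1 : ∫ s in (0:ℝ)..ε, fderiv ℝ σ (x + s, y) (1, 0) = σ (x + ε, y) - c := by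
    have h := intervalIntegral.integral_eq_sub_of_hasDerivAt hderiv1 hib1
    simpa using h
  have hsplit1 : (∫ s in (0:ℝ)..ε, PeanoAux.B (σ (x + s, y)) (fderiv ℝ σ (x + s, y) (1, 0)))
      = (∫ s in (0:ℝ)..ε, PeanoAux.B (σ (x + s, y) - c) (fderiv ℝ σ (x + s, y) (1, 0)))
        + (PeanoAux.B c) (σ (x + ε, y) - c) := by
    rw [← hFTC1, ← ContinuousLinearMap.intervalIntegral_comp_comm (PeanoAux.B c) hib1,
      ← intervalIntegral.integral_add hintJ1 hintBc1]
    refine intervalIntegral.integral_congr fun s hs => ?_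
    show PeanoAux.B (σ (x + s, y)) (fderiv ℝ σ (x + s, y) (1, 0))
      = PeanoAux.B (σ (x + s, y) - c) (fderiv ℝ σ (x + s, y) (1, 0))
        + PeanoAux.B c (fderiv ℝ σ (x + s, y) (1, 0))
    rw [map_sub, ContinuousLinearMap.sub_apply]
    abel
  -- ## Side 2
  have hφ2 : Continuous fun s : ℝ => ((x + ε, y + s) : ℝ × ℝ) := by fun_prop
  have hmemU2 : ∀ s ∈ Set.uIcc (0:ℝ) ε, ((x + ε, y + s) : ℝ × ℝ) ∈ U := by
    intro s hs
    rw [hIcc] at hs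
    exact hballU (hmemB (x + ε) (y + s) habs_e (habs_s' s hs))
  have hcσ2 : ContinuousOn (fun s : ℝ => σ (x + ε, y + s)) (Set.uIcc (0:ℝ) ε) :=
    hσc.comp hφ2.continuousOn hmemU2
  have hcD2 : ContinuousOn (fun s : ℝ => fderiv ℝ σ (x + ε, y + s)) (Set.uIcc (0:ℝ) ε) :=
    hfc.comp hφ2.continuousOn hmemU2
  have hcb2 : ContinuousOn (fun s : ℝ => fderiv ℝ σ (x + ε, y + s) (0, 1)) (Set.uIcc (0:ℝ) ε) :=
    (ContinuousLinearMap.apply ℝ (EuclideanSpace ℝ (Fin 3))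
      (((0, 1) : ℝ × ℝ))).continuous.comp_continuousOn hcD2
  have hib2 : IntervalIntegrable (fun s : ℝ => fderiv ℝ σ (x + ε, y + s) (0, 1))
      MeasureTheory.volume 0 ε := hcb2.intervalIntegrable
  have hintJ2 : IntervalIntegrable
      (fun s : ℝ => PeanoAux.B (σ (x + ε, y + s) - c) (fderiv ℝ σ (x + ε, y + s) (0, 1)))
      MeasureTheory.volume 0 ε :=
    (ContinuousOn.clm_apply (PeanoAux.B.continuous.comp_continuousOn (hcσ2.sub continuousOn_const) :
      ContinuousOn (fun s : ℝ => PeanoAux.B (σ (x + ε, y + s) - c)) (Set.uIcc (0:ℝ) ε)) hcb2).intervalIntegrable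
  have hintBc2 : IntervalIntegrable
      (fun s : ℝ => PeanoAux.B c (fderiv ℝ σ (x + ε, y + s) (0, 1))) MeasureTheory.volume 0 ε :=
    (ContinuousOn.clm_apply continuousOn_const hcb2).intervalIntegrable
  have hderiv2 : ∀ s ∈ Set.uIcc (0:ℝ) ε,
      HasDerivAt (fun s : ℝ => σ (x + ε, y + s)) (fderiv ℝ σ (x + ε, y + s) (0, 1)) s := by
    intro s hs
    have hline : HasDerivAt (fun s : ℝ => ((x + ε, y + s) : ℝ × ℝ)) ((0, 1) : ℝ × ℝ) s := HasDerivAt.prodMk (hasDerivAt_const s (x + ε)) ((hasDerivAt_id s).const_add y)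
    exact (hdiff _ (hmemU2 s hs)).hasFDerivAt.comp_hasDerivAt s hline
  have hFTC2 : ∫ s in (0:ℝ)..ε, fderiv ℝ σ (x + ε, y + s) (0, 1) = σ (x + ε, y + ε) - σ (x + ε, y) := by
    have h := intervalIntegral.integral_eq_sub_of_hasDerivAt hderiv2 hib2
    simpa using h
  have hsplit2 : (∫ s in (0:ℝ)..ε, PeanoAux.B (σ (x + ε, y + s)) (fderiv ℝ σ (x + ε, y + s) (0, 1)))
      = (∫ s in (0:ℝ)..ε, PeanoAux.B (σ (x + ε, y + s) - c) (fderiv ℝ σ (x + ε, y + s) (0, 1)))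
        + (PeanoAux.B c) (σ (x + ε, y + ε) - σ (x + ε, y)) := by
    rw [← hFTC2, ← ContinuousLinearMap.intervalIntegral_comp_comm (PeanoAux.B c) hib2,
      ← intervalIntegral.integral_add hintJ2 hintBc2]
    refine intervalIntegral.integral_congr fun s hs => ?_
    show PeanoAux.B (σ (x + ε, y + s)) (fderiv ℝ σ (x + ε, y + s) (0, 1))
      = PeanoAux.B (σ (x + ε, y + s) - c) (fderiv ℝ σ (x + ε, y + s) (0, 1))
        + PeanoAux.B c (fderiv ℝ σ (x + ε, y + s) (0, 1))
    rw [map_sub, ContinuousLinearMap.sub_apply]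
    abel
  -- ## Side 3
  have hφ3 : Continuous fun s : ℝ => ((x + s, y + ε) : ℝ × ℝ) := by fun_prop
  have hmemU3 : ∀ s ∈ Set.uIcc (0:ℝ) ε, ((x + s, y + ε) : ℝ × ℝ) ∈ U := by
    intro s hs
    rw [hIcc] at hs
    exact hballU (hmemB (x + s) (y + ε) (habs_s s hs) habs_e')
  have hcσ3 : ContinuousOn (fun s : ℝ => σ (x + s, y + ε)) (Set.uIcc (0:ℝ) ε) :=
    hσc.comp hφ3.continuousOn hmemU3
  have hcD3 : ContinuousOn (fun s : ℝ => fderiv ℝ σ (x + s, y + ε)) (Set.uIcc (0:ℝ) ε) :=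
    hfc.comp hφ3.continuousOn hmemU3
  have hcb3 : ContinuousOn (fun s : ℝ => fderiv ℝ σ (x + s, y + ε) (1, 0)) (Set.uIcc (0:ℝ) ε) :=
    (ContinuousLinearMap.apply ℝ (EuclideanSpace ℝ (Fin 3))
      (((1, 0) : ℝ × ℝ))).continuous.comp_continuousOn hcD3
  have hib3 : IntervalIntegrable (fun s : ℝ => fderiv ℝ σ (x + s, y + ε) (1, 0))
      MeasureTheory.volume 0 ε := hcb3.intervalIntegrable
  have hintJ3 : IntervalIntegrable
      (fun s : ℝ => PeanoAux.B (σ (x + s, y + ε) - c) (fderiv ℝ σ (x + s, y + ε) (1, 0)))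
      MeasureTheory.volume 0 ε :=
    (ContinuousOn.clm_apply (PeanoAux.B.continuous.comp_continuousOn (hcσ3.sub continuousOn_const) :
      ContinuousOn (fun s : ℝ => PeanoAux.B (σ (x + s, y + ε) - c)) (Set.uIcc (0:ℝ) ε)) hcb3).intervalIntegrable
  have hintBc3 : IntervalIntegrable
      (fun s : ℝ => PeanoAux.B c (fderiv ℝ σ (x + s, y + ε) (1, 0))) MeasureTheory.volume 0 ε :=
    (ContinuousOn.clm_apply continuousOn_const hcb3).intervalIntegrable
  have hderiv3 : ∀ s ∈ Set.uIcc (0:ℝ) ε,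
      HasDerivAt (fun s : ℝ => σ (x + s, y + ε)) (fderiv ℝ σ (x + s, y + ε) (1, 0)) s := by
    intro s hs
    have hline : HasDerivAt (fun s : ℝ => ((x + s, y + ε) : ℝ × ℝ)) ((1, 0) : ℝ × ℝ) s := HasDerivAt.prodMk ((hasDerivAt_id s).const_add x) (hasDerivAt_const s (y + ε))
    exact (hdiff _ (hmemU3 s hs)).hasFDerivAt.comp_hasDerivAt s hline
  have hFTC3 : ∫ s in (0:ℝ)..ε, fderiv ℝ σ (x + s, y + ε) (1, 0) = σ (x + ε, y + ε) - σ (x, y + ε) := by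
    have h := intervalIntegral.integral_eq_sub_of_hasDerivAt hderiv3 hib3
    simpa using h
  have hsplit3 : (∫ s in (0:ℝ)..ε, PeanoAux.B (σ (x + s, y + ε)) (fderiv ℝ σ (x + s, y + ε) (1, 0)))
      = (∫ s in (0:ℝ)..ε, PeanoAux.B (σ (x + s, y + ε) - c) (fderiv ℝ σ (x + s, y + ε) (1, 0)))
        + (PeanoAux.B c) (σ (x + ε, y + ε) - σ (x, y + ε)) := by
    rw [← hFTC3, ← ContinuousLinearMap.intervalIntegral_comp_comm (PeanoAux.B c) hib3,
      ← intervalIntegral.integral_add hintJ3 hintBc3]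
    refine intervalIntegral.integral_congr fun s hs => ?_
    show PeanoAux.B (σ (x + s, y + ε)) (fderiv ℝ σ (x + s, y + ε) (1, 0))
      = PeanoAux.B (σ (x + s, y + ε) - c) (fderiv ℝ σ (x + s, y + ε) (1, 0))
        + PeanoAux.B c (fderiv ℝ σ (x + s, y + ε) (1, 0))
    rw [map_sub, ContinuousLinearMap.sub_apply]
    abel
  -- ## Side 4
  have hφ4 : Continuous fun s : ℝ => ((x, y + s) : ℝ × ℝ) := by fun_prop
  have hmemU4 : ∀ s ∈ Set.uIcc (0:ℝ) ε, ((x, y + s) : ℝ × ℝ) ∈ U := by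
    intro s hs
    rw [hIcc] at hs
    exact hballU (hmemB x (y + s) habs_0 (habs_s' s hs))
  have hcσ4 : ContinuousOn (fun s : ℝ => σ (x, y + s)) (Set.uIcc (0:ℝ) ε) :=
    hσc.comp hφ4.continuousOn hmemU4
  have hcD4 : ContinuousOn (fun s : ℝ => fderiv ℝ σ (x, y + s)) (Set.uIcc (0:ℝ) ε) :=
    hfc.comp hφ4.continuousOn hmemU4
  have hcb4 : ContinuousOn (fun s : ℝ => fderiv ℝ σ (x, y + s) (0, 1)) (Set.uIcc (0:ℝ) ε) :=
    (ContinuousLinearMap.apply ℝ (EuclideanSpace ℝ (Fin 3))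
      (((0, 1) : ℝ × ℝ))).continuous.comp_continuousOn hcD4
  have hib4 : IntervalIntegrable (fun s : ℝ => fderiv ℝ σ (x, y + s) (0, 1))
      MeasureTheory.volume 0 ε := hcb4.intervalIntegrable
  have hintJ4 : IntervalIntegrable
      (fun s : ℝ => PeanoAux.B (σ (x, y + s) - c) (fderiv ℝ σ (x, y + s) (0, 1)))
      MeasureTheory.volume 0 ε :=
    (ContinuousOn.clm_apply (PeanoAux.B.continuous.comp_continuousOn (hcσ4.sub continuousOn_const) :
      ContinuousOn (fun s : ℝ => PeanoAux.B (σ (x, y + s) - c)) (Set.uIcc (0:ℝ) ε)) hcb4).intervalIntegrable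
  have hintBc4 : IntervalIntegrable
      (fun s : ℝ => PeanoAux.B c (fderiv ℝ σ (x, y + s) (0, 1))) MeasureTheory.volume 0 ε :=
    (ContinuousOn.clm_apply continuousOn_const hcb4).intervalIntegrable
  have hderiv4 : ∀ s ∈ Set.uIcc (0:ℝ) ε,
      HasDerivAt (fun s : ℝ => σ (x, y + s)) (fderiv ℝ σ (x, y + s) (0, 1)) s := by
    intro s hs
    have hline : HasDerivAt (fun s : ℝ => ((x, y + s) : ℝ × ℝ)) ((0, 1) : ℝ × ℝ) s := HasDerivAt.prodMk (hasDerivAt_const s x) ((hasDerivAt_id s).const_add y)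
    exact (hdiff _ (hmemU4 s hs)).hasFDerivAt.comp_hasDerivAt s hline
  have hFTC4 : ∫ s in (0:ℝ)..ε, fderiv ℝ σ (x, y + s) (0, 1) = σ (x, y + ε) - c := by
    have h := intervalIntegral.integral_eq_sub_of_hasDerivAt hderiv4 hib4
    simpa using h
  have hsplit4 : (∫ s in (0:ℝ)..ε, PeanoAux.B (σ (x, y + s)) (fderiv ℝ σ (x, y + s) (0, 1)))
      = (∫ s in (0:ℝ)..ε, PeanoAux.B (σ (x, y + s) - c) (fderiv ℝ σ (x, y + s) (0, 1)))
        + (PeanoAux.B c) (σ (x, y + ε) - c) := by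
    rw [← hFTC4, ← ContinuousLinearMap.intervalIntegral_comp_comm (PeanoAux.B c) hib4,
      ← intervalIntegral.integral_add hintJ4 hintBc4]
    refine intervalIntegral.integral_congr fun s hs => ?_
    show PeanoAux.B (σ (x, y + s)) (fderiv ℝ σ (x, y + s) (0, 1))
      = PeanoAux.B (σ (x, y + s) - c) (fderiv ℝ σ (x, y + s) (0, 1))
        + PeanoAux.B c (fderiv ℝ σ (x, y + s) (0, 1))
    rw [map_sub, ContinuousLinearMap.sub_apply]
    abel
  -- ## model identities
  have hmod1 : ∀ s : ℝ, PeanoAux.B (D (((x + s, y) : ℝ × ℝ) - (x, y))) u = 0 := by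
    intro s
    rw [show ((x + s, y) : ℝ × ℝ) - (x, y) = ((s, 0) : ℝ × ℝ) by simp [Prod.ext_iff],
      hD_s0, PeanoAux.B_smul_left, PeanoAux.B_self, smul_zero]
  have hmod4 : ∀ s : ℝ, PeanoAux.B (D (((x, y + s) : ℝ × ℝ) - (x, y))) v = 0 := by
    intro s
    rw [show ((x, y + s) : ℝ × ℝ) - (x, y) = ((0, s) : ℝ × ℝ) by simp [Prod.ext_iff],
      hD_0s, PeanoAux.B_smul_left, PeanoAux.B_self, smul_zero]
  have hmod2 : ∀ s : ℝ, PeanoAux.B (D (((x + ε, y + s) : ℝ × ℝ) - (x, y))) v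
      = ε • PeanoAux.B u v := by
    intro s
    rw [show ((x + ε, y + s) : ℝ × ℝ) - (x, y) = ((ε, s) : ℝ × ℝ) by simp [Prod.ext_iff],
      hD_es, PeanoAux.B_add_left, PeanoAux.B_smul_left, PeanoAux.B_smul_left,
      PeanoAux.B_self, smul_zero, add_zero]
  have hmod3 : ∀ s : ℝ, PeanoAux.B (D (((x + s, y + ε) : ℝ × ℝ) - (x, y))) u
      = ε • PeanoAux.B v u := by
    intro s
    rw [show ((x + s, y + ε) : ℝ × ℝ) - (x, y) = ((s, ε) : ℝ × ℝ) by simp [Prod.ext_iff],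
      hD_se, PeanoAux.B_add_left, PeanoAux.B_smul_left, PeanoAux.B_smul_left,
      PeanoAux.B_self, smul_zero, zero_add]
  -- ## integral bounds
  have hbound1 : ‖∫ s in (0:ℝ)..ε, PeanoAux.B (σ (x + s, y) - c) (fderiv ℝ σ (x + s, y) (1, 0))‖
      ≤ 8 * M * η * ε * ε := by
    have hb := intervalIntegral.norm_integral_le_of_norm_le_const (C := 8 * M * η * ε)
      (f := fun s : ℝ => PeanoAux.B (σ (x + s, y) - c) (fderiv ℝ σ (x + s, y) (1, 0)))
      (a := 0) (b := ε) ?_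
    · rwa [sub_zero, abs_of_pos hε0] at hb
    · intro s hs
      rw [hIoc] at hs
      have hsIcc : s ∈ Set.Icc (0:ℝ) ε := ⟨hs.1.le, hs.2⟩
      have hmem := hmemB (x + s) y (habs_s s hsIcc) habs_0'
      have hq := hqnorm (x + s) y (habs_s s hsIcc) habs_0'
      calc ‖PeanoAux.B (σ (x + s, y) - c) (fderiv ℝ σ (x + s, y) (1, 0))‖
          = ‖PeanoAux.B (σ (x + s, y) - c) (fderiv ℝ σ (x + s, y) (1, 0))
              - PeanoAux.B (D (((x + s, y) : ℝ × ℝ) - (x, y))) u‖ := by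
            rw [hmod1 s, sub_zero]
        _ ≤ 8 * M * η * ε := hpt (x + s, y) (1, 0) hmem hd10 hq
  have hbound4 : ‖∫ s in (0:ℝ)..ε, PeanoAux.B (σ (x, y + s) - c) (fderiv ℝ σ (x, y + s) (0, 1))‖
      ≤ 8 * M * η * ε * ε := by
    have hb := intervalIntegral.norm_integral_le_of_norm_le_const (C := 8 * M * η * ε)
      (f := fun s : ℝ => PeanoAux.B (σ (x, y + s) - c) (fderiv ℝ σ (x, y + s) (0, 1)))
      (a := 0) (b := ε) ?_
    · rwa [sub_zero, abs_of_pos hε0] at hb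
    · intro s hs
      rw [hIoc] at hs
      have hsIcc : s ∈ Set.Icc (0:ℝ) ε := ⟨hs.1.le, hs.2⟩
      have hmem := hmemB x (y + s) habs_0 (habs_s' s hsIcc)
      have hq := hqnorm x (y + s) habs_0 (habs_s' s hsIcc)
      calc ‖PeanoAux.B (σ (x, y + s) - c) (fderiv ℝ σ (x, y + s) (0, 1))‖
          = ‖PeanoAux.B (σ (x, y + s) - c) (fderiv ℝ σ (x, y + s) (0, 1))
              - PeanoAux.B (D (((x, y + s) : ℝ × ℝ) - (x, y))) v‖ := by
            rw [hmod4 s, sub_zero]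
        _ ≤ 8 * M * η * ε := hpt (x, y + s) (0, 1) hmem hd01 hq
  have hbound2 : ‖(∫ s in (0:ℝ)..ε,
        PeanoAux.B (σ (x + ε, y + s) - c) (fderiv ℝ σ (x + ε, y + s) (0, 1)))
      - (ε * ε) • PeanoAux.B u v‖ ≤ 8 * M * η * ε * ε := by
    have hconst : (ε * ε) • PeanoAux.B u v = ∫ s in (0:ℝ)..ε, ε • PeanoAux.B u v := by
      rw [intervalIntegral.integral_const, sub_zero, smul_smul]
    rw [hconst, ← intervalIntegral.integral_sub hintJ2 intervalIntegrable_const]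
    have hb := intervalIntegral.norm_integral_le_of_norm_le_const (C := 8 * M * η * ε)
      (f := fun s : ℝ => PeanoAux.B (σ (x + ε, y + s) - c) (fderiv ℝ σ (x + ε, y + s) (0, 1))
        - ε • PeanoAux.B u v) (a := 0) (b := ε) ?_
    · rwa [sub_zero, abs_of_pos hε0] at hb
    · intro s hs
      rw [hIoc] at hs
      have hsIcc : s ∈ Set.Icc (0:ℝ) ε := ⟨hs.1.le, hs.2⟩
      have hmem := hmemB (x + ε) (y + s) habs_e (habs_s' s hsIcc)
      have hq := hqnorm (x + ε) (y + s) habs_e (habs_s' s hsIcc)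
      rw [← hmod2 s]
      exact hpt (x + ε, y + s) (0, 1) hmem hd01 hq
  have hbound3 : ‖(∫ s in (0:ℝ)..ε,
        PeanoAux.B (σ (x + s, y + ε) - c) (fderiv ℝ σ (x + s, y + ε) (1, 0)))
      - (ε * ε) • PeanoAux.B v u‖ ≤ 8 * M * η * ε * ε := by
    have hconst : (ε * ε) • PeanoAux.B v u = ∫ s in (0:ℝ)..ε, ε • PeanoAux.B v u := by
      rw [intervalIntegral.integral_const, sub_zero, smul_smul]
    rw [hconst, ← intervalIntegral.integral_sub hintJ3 intervalIntegrable_const]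
    have hb := intervalIntegral.norm_integral_le_of_norm_le_const (C := 8 * M * η * ε)
      (f := fun s : ℝ => PeanoAux.B (σ (x + s, y + ε) - c) (fderiv ℝ σ (x + s, y + ε) (1, 0))
        - ε • PeanoAux.B v u) (a := 0) (b := ε) ?_
    · rwa [sub_zero, abs_of_pos hε0] at hb
    · intro s hs
      rw [hIoc] at hs
      have hsIcc : s ∈ Set.Icc (0:ℝ) ε := ⟨hs.1.le, hs.2⟩
      have hmem := hmemB (x + s) (y + ε) (habs_s s hsIcc) habs_e'
      have hq := hqnorm (x + s) (y + ε) (habs_s s hsIcc) habs_e'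
      rw [← hmod3 s]
      exact hpt (x + s, y + ε) (1, 0) hmem hd10 hq
  -- ## assembly
  beta_reduce
  rw [dist_eq_norm, hsplit1, hsplit2, hsplit3, hsplit4]
  set J1 := ∫ s in (0:ℝ)..ε, PeanoAux.B (σ (x + s, y) - c) (fderiv ℝ σ (x + s, y) (1, 0)) with hJ1
  set J2 := ∫ s in (0:ℝ)..ε,
      PeanoAux.B (σ (x + ε, y + s) - c) (fderiv ℝ σ (x + ε, y + s) (0, 1)) with hJ2
  set J3 := ∫ s in (0:ℝ)..ε,
      PeanoAux.B (σ (x + s, y + ε) - c) (fderiv ℝ σ (x + s, y + ε) (1, 0)) with hJ3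
  set J4 := ∫ s in (0:ℝ)..ε, PeanoAux.B (σ (x, y + s) - c) (fderiv ℝ σ (x, y + s) (0, 1)) with hJ4
  have hE : (σ (x + ε, y) - c) + (σ (x + ε, y + ε) - σ (x + ε, y))
      - (σ (x + ε, y + ε) - σ (x, y + ε)) - (σ (x, y + ε) - c) = 0 := by abel
  have hre : (J1 + (PeanoAux.B c) (σ (x + ε, y) - c))
        + (J2 + (PeanoAux.B c) (σ (x + ε, y + ε) - σ (x + ε, y)))
        - (J3 + (PeanoAux.B c) (σ (x + ε, y + ε) - σ (x, y + ε)))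
        - (J4 + (PeanoAux.B c) (σ (x, y + ε) - c))
      = J1 + J2 - J3 - J4 := by
    have h0 : (PeanoAux.B c) (σ (x + ε, y) - c)
        + (PeanoAux.B c) (σ (x + ε, y + ε) - σ (x + ε, y))
        - (PeanoAux.B c) (σ (x + ε, y + ε) - σ (x, y + ε))
        - (PeanoAux.B c) (σ (x, y + ε) - c) = 0 := by
      rw [← map_add, ← map_sub, ← map_sub, hE, map_zero]
    calc (J1 + (PeanoAux.B c) (σ (x + ε, y) - c))
        + (J2 + (PeanoAux.B c) (σ (x + ε, y + ε) - σ (x + ε, y)))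
        - (J3 + (PeanoAux.B c) (σ (x + ε, y + ε) - σ (x, y + ε)))
        - (J4 + (PeanoAux.B c) (σ (x, y + ε) - c))
        = (J1 + J2 - J3 - J4) + ((PeanoAux.B c) (σ (x + ε, y) - c)
            + (PeanoAux.B c) (σ (x + ε, y + ε) - σ (x + ε, y))
            - (PeanoAux.B c) (σ (x + ε, y + ε) - σ (x, y + ε))
            - (PeanoAux.B c) (σ (x, y + ε) - c)) := by abel
      _ = J1 + J2 - J3 - J4 := by rw [h0, add_zero]
  rw [hre]
  have hεne : ε ≠ 0 := ne_of_gt hε0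
  have hfe : (ε ^ 2)⁻¹ • ((1 / 2 : ℝ) • (J1 + J2 - J3 - J4)) - PeanoAux.B u v
      = ((ε ^ 2)⁻¹ * (1 / 2)) • ((J1 + J2 - J3 - J4)
          - (2 * (ε * ε)) • PeanoAux.B u v) := by
    have h2 : ((ε ^ 2)⁻¹ * (1 / 2)) • ((2 * (ε * ε)) • PeanoAux.B u v) = PeanoAux.B u v := by
      rw [smul_smul, show (ε ^ 2)⁻¹ * (1 / 2) * (2 * (ε * ε)) = 1 by field_simp, one_smul]
    conv_rhs => rw [smul_sub, h2]
    rw [smul_smul]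
  rw [hfe, norm_smul, Real.norm_eq_abs,
    abs_of_pos (show (0:ℝ) < (ε ^ 2)⁻¹ * (1 / 2) by positivity)]
  have hJsum : ‖(J1 + J2 - J3 - J4) - (2 * (ε * ε)) • PeanoAux.B u v‖
      ≤ 32 * M * η * (ε * ε) := by
    have hre2 : (J1 + J2 - J3 - J4) - (2 * (ε * ε)) • PeanoAux.B u v
        = J1 + (J2 - (ε * ε) • PeanoAux.B u v) - (J3 - (ε * ε) • PeanoAux.B v u) - J4 := by
      rw [PeanoAux.B_anticomm u v, smul_neg,
        show (2 * (ε * ε) : ℝ) = (ε * ε) + (ε * ε) by ring, add_smul]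
      abel
    rw [hre2]
    have t1 := norm_sub_le (J1 + (J2 - (ε * ε) • PeanoAux.B u v)
      - (J3 - (ε * ε) • PeanoAux.B v u)) J4
    have t2 := norm_sub_le (J1 + (J2 - (ε * ε) • PeanoAux.B u v))
      (J3 - (ε * ε) • PeanoAux.B v u)
    have t3 := norm_add_le J1 (J2 - (ε * ε) • PeanoAux.B u v)
    linarith [hbound1, hbound2, hbound3, hbound4, t1, t2, t3]
  calc (ε ^ 2)⁻¹ * (1 / 2) * ‖(J1 + J2 - J3 - J4) - (2 * (ε * ε)) • PeanoAux.B u v‖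
      ≤ (ε ^ 2)⁻¹ * (1 / 2) * (32 * M * η * (ε * ε)) :=
        mul_le_mul_of_nonneg_left hJsum (by positivity)
    _ = 16 * M * η := by field_simp; ring
    _ < θ := hηθ
end

section
/- Let m, n be positive integers and consider the Schwarz–Peano polyhedral surface 𝒮_{m,n} inscribed in the cylinder of height 1 and radius 1, consisting of the mn triangles with vertices (cos(2πr/m), sin(2πr/m), s/n), (cos(2π(r+1)/m), sin(2π(r+1)/m), s/n), (cos(π(2r+1)/m), sin(π(2r+1)/m), (s+1)/n) and the mn triangles with vertices (cos(2πr/m), sin(2πr/m), s/n), (cos(π(2r−1)/m), sin(π(2r−1)/m), (s+1)/n), (cos(π(2r+1)/m), sin(π(2r+1)/m), (s+1)/n), for r = 0, …, m−1 and s = 0, …, n−1. Then the total area of 𝒮_{m,n}, i.e., the sum over all these 2mn triangles of (1/2)‖(V₂ − V₁) ×ᵥ (V₃ − V₁)‖ where V₁, V₂, V₃ are the vertices of each triangle, equals a_{m,n} = 2m sin(π/m) √(1 + 4n² sin⁴(π/(2m))). -/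
open Matrix Real

/-- The point `(cos θ, sin θ, z)` of the cylinder of radius 1. -/
noncomputable def cyl (θ z : ℝ) : EuclideanSpace ℝ (Fin 3) :=
  (WithLp.equiv 2 (Fin 3 → ℝ)).symm ![Real.cos θ, Real.sin θ, z]

/-- Area of the triangle of ℝ³ with vertices `V₁`, `V₂`, `V₃`. -/
noncomputable def triArea (V₁ V₂ V₃ : EuclideanSpace ℝ (Fin 3)) : ℝ :=
  (1 / 2) * ‖cross3 (V₂ - V₁) (V₃ - V₁)‖

lemma triArea_cyl (α β γ z w₁ w₂ : ℝ) :
    triArea (cyl α z) (cyl β w₁) (cyl γ w₂) = (1/2) * Real.sqrt (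
      ((sin β - sin α) * (w₂ - z) - (w₁ - z) * (sin γ - sin α))^2 +
      ((w₁ - z) * (cos γ - cos α) - (cos β - cos α) * (w₂ - z))^2 +
      ((cos β - cos α) * (sin γ - sin α) - (sin β - sin α) * (cos γ - cos α))^2) := by
  unfold triArea cross3 cyl
  simp [crossProduct, EuclideanSpace.norm_eq, Fin.sum_univ_three, WithLp.ofLp_sub]

lemma half_sqrt (s X : ℝ) (hs : 0 ≤ s) :
    (1/2) * Real.sqrt ((2*s)^2 * X) = s * Real.sqrt X := by
  rw [Real.sqrt_mul (sq_nonneg _), Real.sqrt_sq_eq_abs, abs_of_nonneg (by linarith)]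
  ring

lemma cos_diff (x y : ℝ) : cos x - cos y = -2 * sin ((x+y)/2) * sin ((x-y)/2) := by
  rw [Real.cos_sub_cos]

lemma sin_diff (x y : ℝ) : sin x - sin y = 2 * sin ((x-y)/2) * cos ((x+y)/2) := by
  rw [Real.sin_sub_sin]

lemma tri1 (α h z d : ℝ) (hs : 0 ≤ sin h) :
    triArea (cyl α z) (cyl (α + 2*h) z) (cyl (α + h) (z + d)) =
      sin h * Real.sqrt (d^2 + 4 * sin (h/2)^4) := by
  rw [triArea_cyl]
  have h1 : cos (α + 2*h) - cos α = -2 * sin (α+h) * sin h := by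
    rw [cos_diff]; ring_nf
  have h2 : sin (α + 2*h) - sin α = 2 * sin h * cos (α+h) := by
    rw [sin_diff]; ring_nf
  have h3 : cos (α + h) - cos α = -2 * sin (α+h/2) * sin (h/2) := by
    rw [cos_diff]; ring_nf
  have h4 : sin (α + h) - sin α = 2 * sin (h/2) * cos (α+h/2) := by
    rw [sin_diff]; ring_nf
  have h5 : sin (α+h) * cos (α+h/2) - cos (α+h) * sin (α+h/2) = sin (h/2) := by
    have := Real.sin_sub (α+h) (α+h/2)
    rw [show α+h-(α+h/2) = h/2 by ring] at this
    linarith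
  have h6 : sin (α+h)^2 + cos (α+h)^2 = 1 := Real.sin_sq_add_cos_sq _
  rw [h1, h2, h3, h4, ← half_sqrt (sin h) _ hs]
  congr 2
  linear_combination (16*sin h^2*sin (h/2)^2*(sin (α+h) * cos (α+h/2) - cos (α+h) * sin (α+h/2) + sin (h/2))) * h5 + (4*d^2*sin h^2) * h6

lemma tri2 (α h z d : ℝ) (hs : 0 ≤ sin h) :
    triArea (cyl α z) (cyl (α - h) (z + d)) (cyl (α + h) (z + d)) =
      sin h * Real.sqrt (d^2 + 4 * sin (h/2)^4) := by
  rw [triArea_cyl]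
  have hneg : ∀ x : ℝ, sin (-x) = - sin x := Real.sin_neg
  have h1 : cos (α - h) - cos α = 2 * sin (α-h/2) * sin (h/2) := by
    have := cos_diff (α-h) α
    rw [show (α-h-α)/2 = -(h/2) by ring, Real.sin_neg, show (α-h+α)/2 = α - h/2 by ring] at this
    linarith
  have h2 : sin (α - h) - sin α = -2 * sin (h/2) * cos (α-h/2) := by
    have := sin_diff (α-h) α
    rw [show (α-h-α)/2 = -(h/2) by ring, Real.sin_neg, show (α-h+α)/2 = α - h/2 by ring] at this
    linarith
  have h3 : cos (α + h) - cos α = -2 * sin (α+h/2) * sin (h/2) := by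
    rw [cos_diff]; ring_nf
  have h4 : sin (α + h) - sin α = 2 * sin (h/2) * cos (α+h/2) := by
    rw [sin_diff]; ring_nf
  have h5 : sin (α-h/2) * cos (α+h/2) - cos (α-h/2) * sin (α+h/2) = -sin h := by
    have := Real.sin_sub (α-h/2) (α+h/2)
    rw [show α-h/2-(α+h/2) = -h by ring, Real.sin_neg] at this
    linarith
  have h6A : sin (α+h/2)^2 + cos (α+h/2)^2 = 1 := Real.sin_sq_add_cos_sq _
  have h6B : sin (α-h/2)^2 + cos (α-h/2)^2 = 1 := Real.sin_sq_add_cos_sq _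
  have h7 : cos (α+h/2) * cos (α-h/2) + sin (α+h/2) * sin (α-h/2) = cos h := by
    have := Real.cos_sub (α+h/2) (α-h/2)
    rw [show α+h/2-(α-h/2) = h by ring] at this
    linarith
  have h8 : cos h = 1 - 2*sin (h/2)^2 := by
    have h2m := Real.cos_two_mul (h/2)
    rw [show 2*(h/2) = h by ring] at h2m
    have := Real.sin_sq_add_cos_sq (h/2)
    linarith
  have h9 : sin (h/2)^2 + cos (h/2)^2 = 1 := Real.sin_sq_add_cos_sq _
  have hsh : sin h = 2 * sin (h/2) * cos (h/2) := by
    have := Real.sin_two_mul (h/2)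
    rw [show 2*(h/2) = h by ring] at this
    exact this
  rw [h1, h2, h3, h4, ← half_sqrt (sin h) _ hs]
  congr 2
  linear_combination (4*d^2*sin (h/2)^2) * h6A + (4*d^2*sin (h/2)^2) * h6B +
    (8*d^2*sin (h/2)^2) * h7 + (8*d^2*sin (h/2)^2) * h8 +
    (-4*d^2*(sin h + 2*sin (h/2)*cos (h/2))) * hsh + (-16*d^2*sin (h/2)^2) * h9 +
    (16*sin (h/2)^4*(sin (α-h/2)*cos (α+h/2) - cos (α-h/2)*sin (α+h/2) - sin h)) * h5

/-- The total area of the Schwarz–Peano polyhedral surface `𝒮_{m,n}` inscribed in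
the cylinder of height 1 and radius 1 equals
`a_{m,n} = 2m sin(π/m) √(1 + 4n² sin⁴(π/(2m)))`. -/
theorem schwarz_peano_polyhedral_area (m n : ℕ) (hm : 0 < m) (hn : 0 < n) :
    ∑ r ∈ Finset.range m, ∑ s ∈ Finset.range n,
        (triArea (cyl (2 * π * r / m) (s / n))
            (cyl (2 * π * (r + 1) / m) (s / n))
            (cyl (π * (2 * r + 1) / m) ((s + 1) / n)) +
          triArea (cyl (2 * π * r / m) (s / n))
            (cyl (π * (2 * r - 1) / m) ((s + 1) / n))
            (cyl (π * (2 * r + 1) / m) ((s + 1) / n))) =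
      2 * m * Real.sin (π / m) *
        Real.sqrt (1 + 4 * n ^ 2 * Real.sin (π / (2 * m)) ^ 4) := by
  have hm' : (m:ℝ) ≠ 0 := Nat.cast_ne_zero.2 hm.ne'
  have hn' : (n:ℝ) ≠ 0 := Nat.cast_ne_zero.2 hn.ne'
  have hm1 : (1:ℝ) ≤ m := Nat.one_le_cast.2 hm
  have hs : 0 ≤ sin (π/m) :=
    Real.sin_nonneg_of_nonneg_of_le_pi (by positivity)
      (div_le_self Real.pi_pos.le hm1)
  have key : ∀ r s : ℕ,
      (triArea (cyl (2 * π * r / m) (s / n))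
            (cyl (2 * π * (r + 1) / m) (s / n))
            (cyl (π * (2 * r + 1) / m) ((s + 1) / n)) +
          triArea (cyl (2 * π * r / m) (s / n))
            (cyl (π * (2 * r - 1) / m) ((s + 1) / n))
            (cyl (π * (2 * r + 1) / m) ((s + 1) / n)))
        = 2 * sin (π/m) * Real.sqrt ((1/n)^2 + 4 * sin ((π/m)/2)^4) := by
    intro r s
    have e1 : (2*π*(r+1)/m : ℝ) = 2*π*r/m + 2*(π/m) := by field_simp
    have e2 : (π*(2*r+1)/m : ℝ) = 2*π*r/m + π/m := by field_simp
    have e3 : (π*(2*r-1)/m : ℝ) = 2*π*r/m - π/m := by field_simp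
    have e4 : ((s+1)/n : ℝ) = s/n + 1/n := by field_simp
    rw [e1, e2, e3, e4, tri1 _ _ _ _ hs, tri2 _ _ _ _ hs]
    ring
  simp only [key, Finset.sum_const, Finset.card_range, nsmul_eq_mul]
  have e5 : ((π/m)/2 : ℝ) = π/(2*m) := by ring
  have e6 : (n:ℝ) * Real.sqrt ((1/n)^2 + 4 * sin (π/(2*m))^4)
      = Real.sqrt (1 + 4 * n^2 * sin (π/(2*m))^4) := by
    rw [show (1:ℝ) + 4 * n^2 * sin (π/(2*m))^4
        = (n:ℝ)^2 * ((1/n)^2 + 4 * sin (π/(2*m))^4) by field_simp,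
      Real.sqrt_mul (sq_nonneg _), Real.sqrt_sq (Nat.cast_nonneg n)]
  rw [e5]
  calc (m:ℝ) * ((n:ℝ) * (2 * sin (π/m) * Real.sqrt ((1/n)^2 + 4 * sin (π/(2*m))^4)))
      = 2 * m * sin (π/m) * ((n:ℝ) * Real.sqrt ((1/n)^2 + 4 * sin (π/(2*m))^4)) := by ring
    _ = _ := by rw [e6]
end
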